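/- arXiv:2304.05651 — 8 statements merged into one kernel-verified Lean document; each statement's English description precedes it below -/
import Mathlib

section
/- For all nonnegative integers n and real x, the degenerate Bell polynomial satisfies the Dobinski-like formula: φ_{n,λ}(x) = e^{-x} ∑_{k=0}^∞ (k)_{n,λ} x^k / k!, where (k)_{n,λ} = k(k-λ)(k-2λ)⋯(k-(n-1)λ) is the degenerate falling factorial. -/
open Real MeasureTheory ProbabilityTheory Filter Asymptotics

/-- The degenerate falling factorial `(x)_{n,l} = x(x-l)(x-2l)...(x-(n-1)l)`. -/
noncomputable def dFall (l x : ℝ) (n : ℕ) : ℝ := ∏ i ∈ Finset.range n, (x - i * l)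

/-- The degenerate exponential `e_l^x(t) = (1 + l t)^(x/l)`. -/
noncomputable def degExp (l x t : ℝ) : ℝ := (1 + l * t) ^ (x / l)


/-- Generalized binomial coefficient `binom(a, n) = a(a-1)...(a-n+1)/n!`. -/
noncomputable def bcoef (a : ℝ) (n : ℕ) : ℝ :=
  (∏ i ∈ Finset.range n, (a - i)) / n.factorial

lemma bcoef_succ (a : ℝ) (n : ℕ) :
    bcoef a (n + 1) = bcoef a n * ((a - n) / (n + 1)) := by
  unfold bcoef
  rw [Finset.prod_range_succ, Nat.factorial_succ, div_mul_div_comm]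
  push_cast
  ring

lemma summable_abs_of_ratio {f ρ : ℕ → ℝ} {c : ℝ} (hc : c < 1)
    (hρ : Tendsto ρ atTop (nhds c))
    (hf : ∀ᶠ n in atTop, |f (n + 1)| = ρ n * |f n|) :
    Summable fun n => |f n| := by
  have hr1 : (c + 1) / 2 < 1 := by linarith
  have hlt : c < (c + 1) / 2 := by linarith
  refine summable_of_ratio_norm_eventually_le hr1 ?_
  filter_upwards [hf, hρ.eventually_lt_const hlt] with n h1 h2
  rw [Real.norm_eq_abs, Real.norm_eq_abs, abs_abs, abs_abs, h1]
  exact mul_le_mul_of_nonneg_right h2.le (abs_nonneg _)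

lemma tendsto_ratio (a b : ℝ) :
    Tendsto (fun n : ℕ => |a - n| / (n + b)) atTop (nhds 1) := by
  have hd : Tendsto (fun n : ℕ => (n : ℝ) + b) atTop atTop :=
    tendsto_atTop_add_const_right _ b tendsto_natCast_atTop_atTop
  have h : Tendsto (fun n : ℕ => 1 - (a + b) / ((n : ℝ) + b)) atTop (nhds 1) := by
    have h2 : Tendsto (fun n : ℕ => (a + b) / ((n : ℝ) + b)) atTop (nhds 0) :=
      Tendsto.div_atTop tendsto_const_nhds hd
    simpa using tendsto_const_nhds.sub h2
  refine h.congr' ?_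
  filter_upwards [eventually_ge_atTop ⌈a⌉₊, eventually_gt_atTop ⌈-b⌉₊] with n hn1 hn2
  have hna : a ≤ (n : ℝ) := le_trans (Nat.le_ceil a) (Nat.cast_le.mpr hn1)
  have hnb : 0 < (n : ℝ) + b := by
    have h3 : -b ≤ (⌈-b⌉₊ : ℝ) := Nat.le_ceil _
    have h4 : (⌈-b⌉₊ : ℝ) < n := Nat.cast_lt.mpr hn2
    linarith
  rw [abs_of_nonpos (by linarith : a - (n : ℝ) ≤ 0)]
  field_simp
  ring

lemma summable_abs_bcoef (a : ℝ) {t : ℝ} (ht : |t| < 1) :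
    Summable fun n => |bcoef a n * t ^ n| := by
  refine summable_abs_of_ratio (ρ := fun n => |a - n| / ((n : ℝ) + 1) * |t|) ht
    (by simpa using (tendsto_ratio a 1).mul_const |t|) ?_
  refine Eventually.of_forall fun n => ?_
  have h1 : |((n : ℝ) + 1)| = (n : ℝ) + 1 := abs_of_nonneg (by positivity)
  rw [bcoef_succ, pow_succ]
  simp only [abs_mul, abs_div, h1]
  ring
set_option maxHeartbeats 1000000 in
lemma hasSum_bcoef (a : ℝ) {t : ℝ} (ht : |t| < 1) :
    HasSum (fun n => bcoef a n * t ^ n) ((1 + t) ^ a) := by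
  set q : ℝ := (1 + |t|) / 2 with hqdef
  have hq0 : 0 < q := by positivity
  have hq1 : q < 1 := by simp only [hqdef]; linarith
  have htq : |t| < q := by simp only [hqdef]; linarith
  set s : Set ℝ := Metric.ball (0 : ℝ) q with hsdef
  have hmem : ∀ u : ℝ, u ∈ s → |u| < q := by
    intro u hu
    simpa [hsdef, Real.dist_eq] using hu
  -- summable bound for the derivative series
  set U : ℕ → ℝ := fun n => |bcoef a n| * (n * q ^ (n - 1)) with hUdef
  have hU' : Summable fun n => |U n| := by
    refine summable_abs_of_ratio (ρ := fun n => |a - n| / (n : ℝ) * q) hq1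
      (by simpa using (tendsto_ratio a 0).mul_const q) ?_
    filter_upwards [eventually_ge_atTop 1] with n hn
    have h1 : (1 : ℝ) ≤ (n : ℝ) := Nat.one_le_cast.mpr hn
    have e1 : |bcoef a (n + 1)| = |bcoef a n| * (|a - n| / ((n : ℝ) + 1)) := by
      rw [bcoef_succ, abs_mul, abs_div, abs_of_nonneg (by positivity : (0:ℝ) ≤ (n : ℝ) + 1)]
    have e2 : q ^ (n + 1 - 1) = q ^ (n - 1) * q := by
      rw [Nat.add_sub_cancel, ← pow_succ, Nat.sub_add_cancel hn]
    rw [abs_of_nonneg (by positivity : (0:ℝ) ≤ U (n + 1)),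
      abs_of_nonneg (by positivity : (0:ℝ) ≤ U n)]
    simp only [hUdef, e1, e2]
    have hne : ((n : ℝ) + 1) ≠ 0 := by positivity
    have hne' : (n : ℝ) ≠ 0 := by positivity
    push_cast
    field_simp
  have hU : Summable U := hU'.congr fun n => abs_of_nonneg (by positivity)
  -- the terms and their derivatives
  have hg : ∀ (m : ℕ) (u : ℝ), u ∈ s →
      HasDerivAt (fun y : ℝ => bcoef a m * y ^ m) (bcoef a m * (m * u ^ (m - 1))) u :=
    fun m u _ => (hasDerivAt_pow m u).const_mul _
  have hg' : ∀ (m : ℕ) (u : ℝ), u ∈ s → ‖bcoef a m * (m * u ^ (m - 1))‖ ≤ U m := by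
    intro m u hu
    have hub : |u| < q := hmem u hu
    rw [Real.norm_eq_abs, abs_mul, abs_mul, abs_pow, Nat.abs_cast]
    simp only [hUdef]
    exact mul_le_mul_of_nonneg_left
      (mul_le_mul_of_nonneg_left (pow_le_pow_left₀ (abs_nonneg u) hub.le _)
        (Nat.cast_nonneg m)) (abs_nonneg _)
  have hsum0 : Summable fun m => bcoef a m * (0 : ℝ) ^ m :=
    summable_abs_iff.mp (summable_abs_bcoef a (by simp))
  set F : ℝ → ℝ := fun y => ∑' m, bcoef a m * y ^ m with hFdef
  have key : ∀ u ∈ s, HasDerivAt F (∑' m, bcoef a m * (m * u ^ (m - 1))) u := by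
    intro u hu
    exact hasDerivAt_tsum_of_isPreconnected hU Metric.isOpen_ball
      (convex_ball (0:ℝ) q).isPreconnected hg hg' (Metric.mem_ball_self hq0) hsum0 hu
  -- the ODE relation
  have hODE : ∀ u ∈ s,
      a * F u = (∑' m, bcoef a m * (m * u ^ (m - 1))) * (1 + u) := by
    intro u hu
    have hsu : |u| < 1 := lt_trans (hmem u hu) hq1
    have S1 : HasSum (fun m => bcoef a m * u ^ m) (F u) :=
      (summable_abs_iff.mp (summable_abs_bcoef a hsu)).hasSum
    have Sd : Summable (fun m => bcoef a m * (m * u ^ (m - 1))) :=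
      Summable.of_norm_bounded hU fun m => hg' m u hu
    set D : ℝ := ∑' m, bcoef a m * (m * u ^ (m - 1)) with hDdef
    have SD : HasSum (fun m => bcoef a m * (m * u ^ (m - 1))) D := Sd.hasSum
    have E0 : HasSum (fun m => bcoef a (m + 1) * ((m + 1 : ℕ) * u ^ (m + 1 - 1))) D := by
      refine (hasSum_nat_add_iff (f := fun m => bcoef a m * (m * u ^ (m - 1))) 1).mpr ?_
      simpa using SD
    have E1 : HasSum (fun m => (a - m) * (bcoef a m * u ^ m)) D := by
      have he : (fun m : ℕ => bcoef a (m + 1) * ((m + 1 : ℕ) * u ^ (m + 1 - 1)))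
          = fun m : ℕ => (a - m) * (bcoef a m * u ^ m) := by
        funext m
        rw [bcoef_succ, Nat.add_sub_cancel]
        have hne : ((m : ℝ) + 1) ≠ 0 := by positivity
        push_cast
        field_simp
      rwa [he] at E0
    have E3 : HasSum (fun m : ℕ => (m : ℝ) * (bcoef a m * u ^ m)) (D * u) := by
      have := SD.mul_right u
      have he : (fun m : ℕ => bcoef a m * (m * u ^ (m - 1)) * u)
          = fun m : ℕ => (m : ℝ) * (bcoef a m * u ^ m) := by
        funext m
        cases m with
        | zero => simp
        | succ k =>
          rw [Nat.add_sub_cancel]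
          push_cast
          ring
      rwa [he] at this
    have Eall : HasSum (fun m => a * (bcoef a m * u ^ m)) (D + D * u) := by
      have := E1.add E3
      have he : (fun m : ℕ => (a - m) * (bcoef a m * u ^ m) + (m : ℝ) * (bcoef a m * u ^ m))
          = fun m : ℕ => a * (bcoef a m * u ^ m) := by
        funext m; ring
      rwa [he] at this
    have := (S1.mul_left a).unique Eall
    rw [this]; ring
  -- the quotient is constant
  have hG : ∀ u ∈ s, HasDerivAt (fun y => F y * (1 + y) ^ (-a)) 0 u := by
    intro u hu
    have hub : |u| < q := hmem u hu
    have hu1 : 0 < 1 + u := by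
      have := abs_lt.mp (lt_trans hub hq1)
      linarith [this.1]
    have hF' := key u hu
    have hr : HasDerivAt (fun y : ℝ => (1 + y) ^ (-a)) (-a * (1 + u) ^ (-a - 1)) u := by
      have h1 : HasDerivAt (fun y : ℝ => 1 + y) 1 u := (hasDerivAt_id u).const_add 1
      have h2 := Real.hasDerivAt_rpow_const (x := 1 + u) (p := -a) (Or.inl (ne_of_gt hu1))
      have h3 := h2.comp u h1
      rw [mul_one] at h3
      exact h3
    have hmulbase := hF'.mul hr
    have hzero : (∑' m, bcoef a m * (m * u ^ (m - 1))) * (1 + u) ^ (-a)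
        + F u * (-a * (1 + u) ^ (-a - 1)) = 0 := by
      have hrw : (1 + u) ^ (-a) = (1 + u) ^ (-a - 1) * (1 + u) := by
        rw [← Real.rpow_add_one (ne_of_gt hu1)]
        ring_nf
      have h := hODE u hu
      rw [hrw]
      linear_combination (-(1 + u) ^ (-a - 1)) * h
    rw [← hzero]
    exact hmulbase
  have ht0 : (0 : ℝ) ∈ s := Metric.mem_ball_self hq0
  have htmem : t ∈ s := by simp [hsdef, Real.dist_eq, htq]
  have hconst : F t * (1 + t) ^ (-a) = F 0 * (1 + 0) ^ (-a) := by
    refine (convex_ball (0:ℝ) q).is_const_of_fderivWithin_eq_zero (𝕜 := ℝ)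
      (fun u hu => ((hG u hu).differentiableAt).differentiableWithinAt) ?_ htmem ht0
    intro u hu
    rw [fderivWithin_of_isOpen Metric.isOpen_ball hu, (hG u hu).hasFDerivAt.fderiv]
    ext y
    simp
  have hF0 : F 0 = 1 := by
    simp only [hFdef]
    rw [tsum_eq_single 0 (fun m hm => by simp [zero_pow hm])]
    simp [bcoef]
  have h1t : 0 < 1 + t := by
    have := abs_lt.mp ht
    linarith [this.1]
  have hFt : F t = (1 + t) ^ a := by
    rw [hF0, add_zero, Real.one_rpow, one_mul, Real.rpow_neg h1t.le] at hconst
    have hpos : (0:ℝ) < (1 + t) ^ a := Real.rpow_pos_of_pos h1t a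
    field_simp at hconst
    exact hconst
  have hs' := (summable_abs_iff.mp (summable_abs_bcoef a ht)).hasSum
  rwa [show (∑' m, bcoef a m * t ^ m) = (1 + t) ^ a from hFt] at hs'
lemma hasFPowerSeriesAt_of_hasSum {F : ℝ → ℝ} {a : ℕ → ℝ} {r : ℝ} (hr : 0 < r)
    (ha : ∀ t : ℝ, |t| < r → HasSum (fun n => a n * t ^ n) (F t)) :
    HasFPowerSeriesAt F (FormalMultilinearSeries.ofScalars ℝ a) 0 := by
  set rn : NNReal := ⟨r / 2, by positivity⟩ with hrn
  refine ⟨rn, ?_, ?_, ?_⟩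
  · -- radius bound
    have hhalf : |r / 2| < r := by
      rw [abs_of_pos (by positivity)]; linarith
    have h0 := ((ha (r / 2) hhalf).summable).tendsto_atTop_zero
    obtain ⟨C, hC⟩ := h0.norm.bddAbove_range
    refine FormalMultilinearSeries.le_radius_of_bound _ C ?_
    intro n
    rw [FormalMultilinearSeries.ofScalars_norm]
    have e : ‖a n‖ * ((rn : ℝ)) ^ n = ‖a n * (r / 2) ^ n‖ := by
      rw [norm_mul, norm_pow, Real.norm_eq_abs (r / 2),
        abs_of_pos (by positivity : (0:ℝ) < r / 2)]
      rfl
    exact e ▸ hC (Set.mem_range_self n)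
  · exact ENNReal.coe_pos.mpr (by rw [← NNReal.coe_lt_coe]; exact (by positivity : (0:ℝ) < r / 2))
  · intro y hy
    rw [mem_emetric_ball_zero_iff, enorm_eq_nnnorm, ENNReal.coe_lt_coe, ← NNReal.coe_lt_coe] at hy
    have hy' : |y| < r := by
      have : ‖y‖ < r / 2 := hy
      rw [Real.norm_eq_abs] at this
      linarith
    have hsum := ha y hy'
    simp only [FormalMultilinearSeries.ofScalars_apply_eq, smul_eq_mul, zero_add]
    exact hsum

lemma coeff_eq_of_hasSum {F : ℝ → ℝ} {a b : ℕ → ℝ} {r : ℝ} (hr : 0 < r)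
    (ha : ∀ t : ℝ, |t| < r → HasSum (fun n => a n * t ^ n) (F t))
    (hb : ∀ t : ℝ, |t| < r → HasSum (fun n => b n * t ^ n) (F t)) : a = b :=
  FormalMultilinearSeries.ofScalars_series_injective (𝕜 := ℝ) (E := ℝ)
    ((hasFPowerSeriesAt_of_hasSum hr ha).eq_formalMultilinearSeries
      (hasFPowerSeriesAt_of_hasSum hr hb))
lemma bcoef_neg_neg (b v : ℝ) (m : ℕ) :
    bcoef (-b) m * (-v) ^ m = (∏ i ∈ Finset.range m, (b + i)) / m.factorial * v ^ m := by
  have hc : (∏ i ∈ Finset.range m, (-b - (i : ℝ)))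
      = ∏ i ∈ Finset.range m, ((-1) * (b + (i : ℝ))) :=
    Finset.prod_congr rfl fun i _ => by ring
  have h : (∏ i ∈ Finset.range m, (-b - (i : ℝ)))
      = (-1) ^ m * ∏ i ∈ Finset.range m, (b + (i : ℝ)) := by
    rw [hc, Finset.prod_mul_distrib, Finset.prod_const, Finset.card_range]
  have hv : (-v) ^ m = (-1) ^ m * v ^ m := by
    rw [neg_eq_neg_one_mul, mul_pow]
  unfold bcoef
  rw [h, hv]
  have h2 : ((-1 : ℝ) ^ m) * ((-1 : ℝ) ^ m) = 1 := by
    rw [← pow_add, ← two_mul, pow_mul, neg_one_sq, one_pow]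
  calc (-1) ^ m * (∏ i ∈ Finset.range m, (b + (i:ℝ))) / m.factorial * ((-1) ^ m * v ^ m)
      = ((-1:ℝ) ^ m * (-1:ℝ) ^ m) * ((∏ i ∈ Finset.range m, (b + (i:ℝ))) / m.factorial * v ^ m) := by
        ring
    _ = (∏ i ∈ Finset.range m, (b + (i:ℝ))) / m.factorial * v ^ m := by rw [h2, one_mul]

lemma abs_bcoef_mul_le (a u : ℝ) (m : ℕ) :
    |bcoef a m * u ^ m| ≤ bcoef (-|a|) m * (-|u|) ^ m := by
  rw [abs_mul, abs_pow, bcoef_neg_neg]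
  have h1 : |bcoef a m| ≤ (∏ i ∈ Finset.range m, (|a| + i)) / m.factorial := by
    unfold bcoef
    rw [abs_div, Nat.abs_cast, Finset.abs_prod]
    have hfact : (0:ℝ) < m.factorial := by exact_mod_cast m.factorial_pos
    refine (div_le_div_iff_of_pos_right hfact).mpr ?_
    refine Finset.prod_le_prod (fun i _ => abs_nonneg _) (fun i _ => ?_)
    calc |a - (i:ℝ)| = |a + -(i:ℝ)| := by rw [sub_eq_add_neg]
      _ ≤ |a| + |-(i:ℝ)| := abs_add_le _ _
      _ = |a| + i := by rw [abs_neg, Nat.abs_cast]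
  exact mul_le_mul_of_nonneg_right h1 (pow_nonneg (abs_nonneg u) m)

lemma tsum_abs_bcoef_le (a : ℝ) {u : ℝ} (hu : |u| < 1) :
    (∑' m, |bcoef a m * u ^ m|) ≤ (1 - |u|) ^ (-|a|) := by
  have hneg : |(-|u|)| < 1 := by rwa [abs_neg, abs_abs]
  have hbig := hasSum_bcoef (-|a|) hneg
  rw [show (1 + -|u|) = 1 - |u| from by ring] at hbig
  calc (∑' m, |bcoef a m * u ^ m|) ≤ ∑' m, bcoef (-|a|) m * (-|u|) ^ m :=
        Summable.tsum_le_tsum (fun m => abs_bcoef_mul_le a u m) (summable_abs_bcoef a hu) hbig.summable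
    _ = (1 - |u|) ^ (-|a|) := hbig.tsum_eq

lemma dFall_eq_bcoef (l : ℝ) (hl : l ≠ 0) (y t : ℝ) (m : ℕ) :
    dFall l y m * t ^ m / (m.factorial : ℝ) = bcoef (y / l) m * (l * t) ^ m := by
  unfold dFall bcoef
  rw [mul_pow]
  have hc : (∏ i ∈ Finset.range m, (y - (i:ℝ) * l))
      = ∏ i ∈ Finset.range m, (l * (y / l - i)) :=
    Finset.prod_congr rfl fun i _ => by field_simp
  have h : (∏ i ∈ Finset.range m, (y - (i:ℝ) * l))
      = l ^ m * ∏ i ∈ Finset.range m, (y / l - i) := by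
    rw [hc, Finset.prod_mul_distrib, Finset.prod_const, Finset.card_range]
  rw [h]
  ring

theorem dobinski_like_formula (l : ℝ) (hl : l ≠ 0)
    (φ : ℕ → ℝ → ℝ)
    (hφ : ∀ x t : ℝ, |l * t| < 1 →
      HasSum (fun n : ℕ => φ n x * t ^ n / (n.factorial : ℝ))
        (Real.exp (x * (degExp l 1 t - 1))))
    (n : ℕ) (x : ℝ) :
    HasSum (fun k : ℕ => dFall l (k : ℝ) n * x ^ k / (k.factorial : ℝ))
      (Real.exp x * φ n x) := by
  have hl0 : (0:ℝ) < |l| := abs_pos.mpr hl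
  set r : ℝ := |l|⁻¹ with hrdef
  have hrpos : 0 < r := by positivity
  have hsmall : ∀ t : ℝ, |t| < r → |l * t| < 1 := by
    intro t ht
    rw [abs_mul]
    calc |l| * |t| < |l| * r := by exact mul_lt_mul_of_pos_left ht hl0
      _ = 1 := mul_inv_cancel₀ (ne_of_gt hl0)
  set f : ℝ → ℕ × ℕ → ℝ := fun t p =>
    x ^ p.1 / (p.1.factorial : ℝ) * (dFall l (p.1 : ℝ) p.2 * t ^ p.2 / (p.2.factorial : ℝ))
    with hfdef
  -- absolute summability over pairs
  have habs : ∀ t : ℝ, |t| < r → Summable fun p : ℕ × ℕ => |f t p| := by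
    intro t ht
    have hu : |l * t| < 1 := hsmall t ht
    have h1mu : (0:ℝ) ≤ 1 - |l * t| := by linarith
    set w : ℝ := (1 - |l * t|) ^ (-(|l|⁻¹) : ℝ) with hwdef
    have hfiber : ∀ k : ℕ, (fun m => |f t (k, m)|)
        = fun m => |x ^ k / (k.factorial : ℝ)| * |bcoef ((k : ℝ) / l) m * (l * t) ^ m| := by
      intro k; funext m
      simp only [hfdef]
      rw [abs_mul, dFall_eq_bcoef l hl]
    refine (summable_prod_of_nonneg fun p => abs_nonneg _).mpr ⟨?_, ?_⟩
    · intro k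
      rw [hfiber k]
      exact (summable_abs_bcoef _ hu).mul_left _
    · refine Summable.of_nonneg_of_le (fun k => tsum_nonneg fun m => abs_nonneg _)
        (fun k => ?_) (Real.summable_pow_div_factorial (|x| * w))
      have hcast : |((k:ℝ)/l)| = (k : ℝ) * |l|⁻¹ := by
        rw [abs_div, Nat.abs_cast, div_eq_mul_inv]
      calc (∑' m, |f t (k, m)|)
          = |x ^ k / (k.factorial : ℝ)| * ∑' m, |bcoef ((k : ℝ) / l) m * (l * t) ^ m| := by
            rw [hfiber k, tsum_mul_left]
        _ ≤ |x ^ k / (k.factorial : ℝ)| * (1 - |l * t|) ^ (-|((k:ℝ)/l)|) :=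
            mul_le_mul_of_nonneg_left (tsum_abs_bcoef_le _ hu) (abs_nonneg _)
        _ = (|x| * w) ^ k / (k.factorial : ℝ) := by
            rw [abs_div, abs_pow, Nat.abs_cast, hcast,
              show -((k:ℝ) * |l|⁻¹) = (-(|l|⁻¹)) * (k:ℝ) from by ring,
              Real.rpow_mul h1mu, Real.rpow_natCast, ← hwdef, mul_pow]
            ring
  -- summability of the coefficient series
  have hker : ∀ m : ℕ, Summable fun k : ℕ => dFall l (k : ℝ) m * x ^ k / (k.factorial : ℝ) := by
    intro m
    have ht2 : |r / 2| < r := by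
      rw [abs_of_pos (by positivity)]; linarith
    have hs := ((summable_abs_iff.mp (habs (r/2) ht2)).prod_symm).prod_factor m
    have hrne : (r / 2 : ℝ) ≠ 0 := by positivity
    have hmne : ((m.factorial : ℝ)) ≠ 0 := Nat.cast_ne_zero.mpr m.factorial_ne_zero
    have h2 := hs.mul_right (((r/2) ^ m / (m.factorial : ℝ))⁻¹)
    refine h2.congr fun k => ?_
    have hkne : ((k.factorial : ℝ)) ≠ 0 := Nat.cast_ne_zero.mpr k.factorial_ne_zero
    simp only [hfdef, Prod.fst_swap, Prod.snd_swap]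
    field_simp
  -- HasSum identity for the coefficient sums
  have hmain : ∀ t : ℝ, |t| < r →
      HasSum (fun m : ℕ =>
          ((∑' k : ℕ, dFall l (k : ℝ) m * x ^ k / (k.factorial : ℝ)) / (m.factorial : ℝ)) * t ^ m)
        (Real.exp (x * (1 + l * t) ^ (1 / l))) := by
    intro t ht
    have hu : |l * t| < 1 := hsmall t ht
    have h1u : (0:ℝ) < 1 + l * t := by
      have := abs_lt.mp hu; linarith [this.1]
    have hrow : ∀ k : ℕ, HasSum (fun m => f t (k, m))
        (x ^ k / (k.factorial : ℝ) * (1 + l * t) ^ ((k : ℝ) / l)) := by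
      intro k
      have h := (hasSum_bcoef ((k:ℝ)/l) hu).mul_left (x ^ k / (k.factorial : ℝ))
      have he : (fun m => x ^ k / (k.factorial:ℝ) * (bcoef ((k:ℝ)/l) m * (l*t)^m))
          = fun m => f t (k, m) := by
        funext m; simp only [hfdef]; rw [dFall_eq_bcoef l hl]
      rwa [he] at h
    have hcol : HasSum (fun k : ℕ => x ^ k / (k.factorial : ℝ) * (1 + l*t) ^ ((k:ℝ)/l))
        (Real.exp (x * (1 + l*t) ^ (1/l))) := by
      have he := NormedSpace.expSeries_div_hasSum_exp (x * (1 + l*t) ^ (1/l))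
      rw [← Real.exp_eq_exp_ℝ] at he
      have hfn : (fun k : ℕ => (x * (1 + l*t) ^ (1/l)) ^ k / (k.factorial : ℝ))
          = fun k : ℕ => x ^ k / (k.factorial : ℝ) * (1 + l*t) ^ ((k:ℝ)/l) := by
        funext k
        rw [show ((k:ℝ)/l) = (1/l) * (k:ℝ) from by ring, Real.rpow_mul h1u.le,
          Real.rpow_natCast, mul_pow]
        ring
      rwa [hfn] at he
    have hsf : Summable (f t) := summable_abs_iff.mp (habs t ht)
    have htot : HasSum (f t) (Real.exp (x * (1 + l*t) ^ (1/l))) := by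
      have h1 := hsf.hasSum
      have h2 := h1.prod_fiberwise hrow
      rwa [h2.unique hcol] at h1
    have hswap : HasSum ((f t) ∘ (Equiv.prodComm ℕ ℕ)) (Real.exp (x * (1 + l*t) ^ (1/l))) :=
      ((Equiv.prodComm ℕ ℕ).hasSum_iff).mpr htot
    refine hswap.prod_fiberwise fun m => ?_
    have h := (hker m).hasSum.mul_right (t ^ m / (m.factorial : ℝ))
    have he : (fun k : ℕ => (dFall l (k:ℝ) m * x ^ k / (k.factorial:ℝ)) * (t^m / (m.factorial:ℝ)))
        = fun k : ℕ => ((f t) ∘ (Equiv.prodComm ℕ ℕ)) (m, k) := by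
      funext k
      simp only [hfdef, Function.comp_apply, Equiv.prodComm_apply, Prod.swap_prod_mk]
      ring
    rw [he] at h
    have hval : (∑' k : ℕ, dFall l (k:ℝ) m * x ^ k / (k.factorial:ℝ)) * (t^m / (m.factorial:ℝ))
        = ((∑' k : ℕ, dFall l (k:ℝ) m * x ^ k / (k.factorial:ℝ)) / (m.factorial:ℝ)) * t^m := by
      ring
    rwa [hval] at h
  -- the φ side
  have hphi : ∀ t : ℝ, |t| < r →
      HasSum (fun m : ℕ => (Real.exp x * φ m x / (m.factorial : ℝ)) * t ^ m)
        (Real.exp (x * (1 + l * t) ^ (1 / l))) := by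
    intro t ht
    have hu := hsmall t ht
    have h := (hφ x t hu).mul_left (Real.exp x)
    have hv : Real.exp x * Real.exp (x * (degExp l 1 t - 1))
        = Real.exp (x * (1 + l*t) ^ (1/l)) := by
      rw [← Real.exp_add]
      congr 1
      unfold degExp
      ring
    have he : (fun m : ℕ => Real.exp x * (φ m x * t ^ m / (m.factorial : ℝ)))
        = fun m : ℕ => (Real.exp x * φ m x / (m.factorial : ℝ)) * t ^ m := by
      funext m; ring
    rw [hv, he] at h
    exact h
  have heq := coeff_eq_of_hasSum hrpos hmain hphi
  have hmne : ((n.factorial : ℝ)) ≠ 0 := Nat.cast_ne_zero.mpr n.factorial_ne_zero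
  have heqn : (∑' k : ℕ, dFall l (k : ℝ) n * x ^ k / (k.factorial : ℝ))
      = Real.exp x * φ n x := by
    have h := congrFun heq n
    field_simp at h
    exact h
  rw [← heqn]
  exact (hker n).hasSum
end

section
/- The degenerate Bell numbers satisfy φ_{n,λ} = (1/e) ∑_{k=0}^∞ (k)_{n,λ}/k! for all n ≥ 0. -/
open Real MeasureTheory ProbabilityTheory Filter Asymptotics

section Aux
open Real Filter Finset
open scoped ENNReal NNReal

namespace Dob

/-- generalized binomial coefficient -/
noncomputable def bc (a : ℝ) (n : ℕ) : ℝ :=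
  (∏ i ∈ Finset.range n, (a - i)) / (n.factorial : ℝ)

/-- positive majorant -/
noncomputable def qb (a : ℝ) (n : ℕ) : ℝ :=
  (∏ i ∈ Finset.range n, (|a| + 1 + i)) / (n.factorial : ℝ)

lemma qb_pos (a : ℝ) (n : ℕ) : 0 < qb a n := by
  apply div_pos
  · exact Finset.prod_pos fun i _ => by positivity
  · exact_mod_cast n.factorial_pos

lemma abs_bc_le (a : ℝ) (n : ℕ) : |bc a n| ≤ qb a n := by
  unfold bc qb
  rw [abs_div, abs_of_pos (by exact_mod_cast n.factorial_pos : (0:ℝ) < n.factorial)]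
  gcongr
  rw [Finset.abs_prod]
  refine Finset.prod_le_prod (fun i _ => abs_nonneg _) (fun i _ => ?_)
  calc |a - (i:ℝ)| ≤ |a| + |(i:ℝ)| := abs_sub _ _
    _ ≤ |a| + 1 + i := by rw [Nat.abs_cast]; linarith

lemma qb_succ (a : ℝ) (n : ℕ) :
    qb a (n+1) = qb a n * ((|a| + 1 + n) / (n + 1)) := by
  unfold qb
  rw [Finset.prod_range_succ, Nat.factorial_succ]
  have h1 : ((n.factorial : ℝ)) ≠ 0 := by exact_mod_cast n.factorial_ne_zero
  have h2 : ((n:ℝ) + 1) ≠ 0 := by positivity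
  push_cast
  field_simp

lemma summable_qb_mul (a : ℝ) {x : ℝ} (h0 : 0 < x) (h1 : x < 1) :
    Summable (fun n : ℕ => qb a n * (n + 1) * x ^ n) := by
  have hpos : ∀ n : ℕ, 0 < qb a n * (n + 1) * x ^ n := fun n => by
    have := qb_pos a n; positivity
  apply summable_of_ratio_test_tendsto_lt_one h1
    (Eventually.of_forall fun n => (hpos n).ne')
  have key : ∀ n : ℕ, ‖qb a (n+1) * ((n:ℝ)+1+1) * x ^ (n+1)‖ / ‖qb a n * ((n:ℝ)+1) * x ^ n‖
      = (1 + |a| * (1 / ((n:ℝ)+1))) * (1 + 1 / ((n:ℝ)+1)) * x := by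
    intro n
    have hn : (0:ℝ) < (n:ℝ) + 1 := by positivity
    have hp1 : (0:ℝ) < qb a (n+1) * ((n:ℝ)+1+1) * x ^ (n+1) := by
      have := qb_pos a (n+1); positivity
    rw [Real.norm_eq_abs, Real.norm_eq_abs, abs_of_pos hp1, abs_of_pos (hpos n), qb_succ]
    have hq := (qb_pos a n).ne'
    have hx := h0.ne'
    field_simp
    ring
  have t0 : Tendsto (fun n : ℕ => (1:ℝ) / ((n:ℝ)+1)) atTop (nhds 0) :=
    tendsto_one_div_add_atTop_nhds_zero_nat
  have tl : Tendsto (fun n : ℕ => (1 + |a| * (1 / ((n:ℝ)+1))) * (1 + 1 / ((n:ℝ)+1)) * x)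
      atTop (nhds x) := by
    have := (((t0.const_mul |a|).const_add 1).mul (t0.const_add 1)).mul_const x
    simpa using this
  refine tl.congr fun n => ?_
  rw [← key n]
  push_cast
  ring_nf

lemma half_lt_one {x : ℝ} (hx : |x| < 1) : (|x| + 1) / 2 < 1 := by linarith
lemma half_pos' {x : ℝ} : (0:ℝ) < (|x| + 1) / 2 := by positivity
lemma lt_half {x : ℝ} (hx : |x| < 1) : |x| < (|x| + 1) / 2 := by linarith

lemma summable_bc_aux (a : ℝ) {x s : ℝ} (hxs : |x| ≤ s) (h0 : 0 < s) (h1 : s < 1) :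
    Summable (fun n : ℕ => bc a n * x ^ n) := by
  refine Summable.of_norm_bounded ((summable_qb_mul a h0 h1)) fun n => ?_
  rw [norm_mul, norm_pow, Real.norm_eq_abs, Real.norm_eq_abs]
  have e1 : |bc a n| ≤ qb a n := abs_bc_le a n
  have e2 : |x| ^ n ≤ s ^ n := pow_le_pow_left₀ (abs_nonneg x) hxs n
  have e3 : (0:ℝ) ≤ s ^ n := pow_nonneg h0.le n
  have e4 : (0:ℝ) ≤ qb a n := (qb_pos a n).le
  have e5 : (1:ℝ) ≤ (n:ℝ) + 1 := by
    have := Nat.cast_nonneg (α := ℝ) n; linarith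
  calc |bc a n| * |x| ^ n ≤ qb a n * s ^ n :=
        mul_le_mul e1 e2 (pow_nonneg (abs_nonneg x) n) e4
    _ ≤ qb a n * ((n:ℝ) + 1) * s ^ n :=
        mul_le_mul_of_nonneg_right (le_mul_of_one_le_right e4 e5) e3
lemma summable_bc (a : ℝ) {x : ℝ} (hx : |x| < 1) :
    Summable (fun n : ℕ => bc a n * x ^ n) :=
  summable_bc_aux a (lt_half hx).le half_pos' (half_lt_one hx)

lemma summable_deriv_majorant (a : ℝ) {s : ℝ} (h0 : 0 < s) (h1 : s < 1) :
    Summable (fun n : ℕ => qb a n * n * s ^ (n - 1)) := by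
  refine Summable.of_nonneg_of_le
    (fun n => mul_nonneg (mul_nonneg (qb_pos a n).le n.cast_nonneg) (pow_nonneg h0.le _))
    (fun n => ?_) ((summable_qb_mul a h0 h1).mul_left (1/s))
  rcases n with _ | m
  · simp only [Nat.cast_zero, mul_zero, zero_mul, Nat.cast_ofNat]
    have : (0:ℝ) ≤ qb a 0 * (0 + 1) * s ^ 0 := by
      have := (qb_pos a 0).le; simp; linarith
    have hs' : (0:ℝ) ≤ 1/s := by positivity
    positivity
  · have hq := (qb_pos a (m+1)).le
    have hsp : (0:ℝ) ≤ s ^ m := pow_nonneg h0.le m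
    simp only [Nat.add_sub_cancel]
    push_cast
    calc qb a (m+1) * ((m:ℝ)+1) * s ^ m ≤ qb a (m+1) * (((m:ℝ)+1)+1) * s ^ m := by nlinarith
      _ = 1 / s * (qb a (m+1) * (((m:ℝ)+1)+1) * s ^ (m+1)) := by
          rw [pow_succ]; field_simp
lemma summable_deriv_terms (a : ℝ) {y s : ℝ} (hys : |y| ≤ s) (h0 : 0 < s) (h1 : s < 1) :
    Summable (fun n : ℕ => bc a n * ((n:ℝ) * y ^ (n - 1))) := by
  refine Summable.of_norm_bounded (summable_deriv_majorant a h0 h1) fun n => ?_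
  rw [norm_mul, norm_mul, Real.norm_eq_abs, Real.norm_eq_abs, Real.norm_eq_abs, Nat.abs_cast,
    abs_pow]
  have e1 : |bc a n| ≤ qb a n := abs_bc_le a n
  have e2 : |y| ^ (n-1) ≤ s ^ (n-1) := pow_le_pow_left₀ (abs_nonneg y) hys n.pred
  have e3 : (0:ℝ) ≤ (n:ℝ) * s ^ (n-1) := mul_nonneg n.cast_nonneg (pow_nonneg h0.le _)
  calc |bc a n| * ((n:ℝ) * |y| ^ (n-1)) ≤ qb a n * ((n:ℝ) * s ^ (n-1)) :=
        mul_le_mul e1 (by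
          exact mul_le_mul_of_nonneg_left e2 n.cast_nonneg)
          (mul_nonneg n.cast_nonneg (pow_nonneg (abs_nonneg y) _)) (qb_pos a n).le
    _ = qb a n * n * s ^ (n-1) := by ring

lemma hasDerivAt_bcsum (a : ℝ) {y : ℝ} (hy : |y| < 1) :
    HasDerivAt (fun z : ℝ => ∑' n : ℕ, bc a n * z ^ n)
      (∑' n : ℕ, bc a n * ((n:ℝ) * y ^ (n - 1))) y := by
  set s : ℝ := (|y| + 1) / 2 with hs
  have h0 : 0 < s := half_pos'
  have h1 : s < 1 := half_lt_one hy
  have hys : |y| < s := lt_half hy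
  refine hasDerivAt_tsum_of_isPreconnected (u := fun n : ℕ => qb a n * n * s ^ (n-1))
    (summable_deriv_majorant a h0 h1) Metric.isOpen_ball
    ((convex_ball (0:ℝ) s).isPreconnected)
    (fun n z _ => (hasDerivAt_pow n z).const_mul (bc a n))
    (fun n z hz => ?_) ?_ (summable_bc a (x := 0) (by simp)) ?_
  · rw [Metric.mem_ball, Real.dist_eq, sub_zero] at hz
    rw [norm_mul, norm_mul, Real.norm_eq_abs, Real.norm_eq_abs, Real.norm_eq_abs, Nat.abs_cast,
      abs_pow]
    have e1 : |bc a n| ≤ qb a n := abs_bc_le a n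
    have e2 : |z| ^ (n-1) ≤ s ^ (n-1) := pow_le_pow_left₀ (abs_nonneg z) hz.le n.pred
    calc |bc a n| * ((n:ℝ) * |z| ^ (n-1)) ≤ qb a n * ((n:ℝ) * s ^ (n-1)) :=
          mul_le_mul e1 (mul_le_mul_of_nonneg_left e2 n.cast_nonneg)
            (mul_nonneg n.cast_nonneg (pow_nonneg (abs_nonneg z) _)) (qb_pos a n).le
      _ = qb a n * n * s ^ (n-1) := by ring
  · rw [Metric.mem_ball, Real.dist_eq, sub_zero, abs_zero]; exact h0
  · rw [Metric.mem_ball, Real.dist_eq, sub_zero]; exact hys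

lemma bc_succ_mul (a : ℝ) (m : ℕ) :
    bc a (m+1) * ((m:ℝ) + 1) = (a - m) * bc a m := by
  unfold bc
  rw [Finset.prod_range_succ, Nat.factorial_succ]
  have h1 : ((m.factorial : ℝ)) ≠ 0 := by exact_mod_cast m.factorial_ne_zero
  have h2 : ((m:ℝ) + 1) ≠ 0 := by positivity
  push_cast
  field_simp

lemma deriv_identity (a : ℝ) {y : ℝ} (hy : |y| < 1) :
    (1 + y) * (∑' n : ℕ, bc a n * ((n:ℝ) * y ^ (n - 1)))
      = a * ∑' n : ℕ, bc a n * y ^ n := by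
  have hsumD := summable_deriv_terms a (lt_half hy).le half_pos' (half_lt_one hy)
  set D : ℝ := ∑' n : ℕ, bc a n * ((n:ℝ) * y ^ (n - 1)) with hD
  set G : ℝ := ∑' n : ℕ, bc a n * y ^ n with hG
  have hDsum : HasSum (fun n : ℕ => bc a n * ((n:ℝ) * y ^ (n - 1))) D := hsumD.hasSum
  have hGsum : HasSum (fun n : ℕ => bc a n * y ^ n) G := (summable_bc a hy).hasSum
  have hyD : HasSum (fun n : ℕ => (n:ℝ) * bc a n * y ^ n) (y * D) := by
    have h := hDsum.mul_left y
    have e : (fun n : ℕ => y * (bc a n * ((n:ℝ) * y ^ (n - 1))))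
        = fun n : ℕ => (n:ℝ) * bc a n * y ^ n := by
      funext n
      rcases n with _ | m
      · simp
      · simp only [Nat.add_sub_cancel]
        push_cast
        rw [pow_succ]
        ring
    rwa [e] at h
  have hshift : HasSum (fun m : ℕ => (a - m) * bc a m * y ^ m) D := by
    have h := (hasSum_nat_add_iff' (f := fun n : ℕ => bc a n * ((n:ℝ) * y ^ (n - 1))) 1).mpr hDsum
    simp only [Finset.range_one, Finset.sum_singleton, Nat.cast_zero, zero_mul, mul_zero,
      sub_zero] at h
    have e : (fun m : ℕ => bc a (m+1) * (((m+1:ℕ):ℝ) * y ^ ((m+1) - 1)))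
        = fun m : ℕ => (a - m) * bc a m * y ^ m := by
      funext m
      simp only [Nat.add_sub_cancel]
      push_cast
      calc bc a (m+1) * (((m:ℝ)+1) * y ^ m) = (bc a (m+1) * ((m:ℝ)+1)) * y ^ m := by ring
        _ = (a - m) * bc a m * y ^ m := by rw [bc_succ_mul a m]
    rwa [e] at h
  have h4 : HasSum (fun m : ℕ => (a - m) * bc a m * y ^ m) (a * G - y * D) := by
    have := (hGsum.mul_left a).sub hyD
    refine this.congr_fun fun m => ?_
    ring
  have := hshift.unique h4
  linarith

lemma hasSum_binomial (a : ℝ) {x : ℝ} (hx : |x| < 1) :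
    HasSum (fun n : ℕ => bc a n * x ^ n) ((1 + x) ^ a) := by
  have hsum := summable_bc a hx
  suffices h : (∑' n : ℕ, bc a n * x ^ n) = (1 + x) ^ a by
    rw [← h]; exact hsum.hasSum
  have hderiv : ∀ y ∈ Set.Ioo (-1:ℝ) 1,
      HasDerivAt (fun z : ℝ => (∑' n : ℕ, bc a n * z ^ n) * (1 + z) ^ (-a)) 0 y := by
    intro y hy
    have hy1 : |y| < 1 := abs_lt.mpr ⟨hy.1, hy.2⟩
    have hp : (0:ℝ) < 1 + y := by have := hy.1; linarith
    have h1 := hasDerivAt_bcsum a hy1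
    have h2 : HasDerivAt (fun z : ℝ => (1 + z) ^ (-a)) (-a * (1 + y) ^ (-a - 1)) y := by
      have hid : HasDerivAt (fun z : ℝ => 1 + z) 1 y := by
        simpa using (hasDerivAt_id y).const_add 1
      have := hid.rpow_const (p := -a) (Or.inl hp.ne')
      simpa using this
    have h3 := h1.mul h2
    have hident := deriv_identity a hy1
    have hval : (∑' n : ℕ, bc a n * ((n:ℝ) * y ^ (n - 1))) * (1 + y) ^ (-a)
        + (∑' n : ℕ, bc a n * y ^ n) * (-a * (1 + y) ^ (-a - 1)) = 0 := by
      have e1 : (1 + y) ^ (-a) = (1 + y) ^ (-a - 1) * (1 + y) := by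
        have e1' := Real.rpow_add hp (-a - 1) 1
        rw [Real.rpow_one] at e1'
        rw [← e1']
        congr 1
        ring
      rw [e1]
      have e2 : (∑' n : ℕ, bc a n * ((n:ℝ) * y ^ (n - 1))) * ((1 + y) ^ (-a - 1) * (1 + y))
          + (∑' n : ℕ, bc a n * y ^ n) * (-a * (1 + y) ^ (-a - 1))
          = (1 + y) ^ (-a - 1) * ((1 + y) * (∑' n : ℕ, bc a n * ((n:ℝ) * y ^ (n - 1)))
              - a * (∑' n : ℕ, bc a n * y ^ n)) := by ring
      rw [e2, hident, sub_self, mul_zero]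
    exact hval ▸ h3
  have hdiff : DifferentiableOn ℝ
      (fun z : ℝ => (∑' n : ℕ, bc a n * z ^ n) * (1 + z) ^ (-a)) (Set.Ioo (-1:ℝ) 1) :=
    fun y hy => (hderiv y hy).differentiableAt.differentiableWithinAt
  have hfd : ∀ y ∈ Set.Ioo (-1:ℝ) 1,
      fderivWithin ℝ (fun z : ℝ => (∑' n : ℕ, bc a n * z ^ n) * (1 + z) ^ (-a))
        (Set.Ioo (-1:ℝ) 1) y = 0 := by
    intro y hy
    rw [fderivWithin_of_isOpen isOpen_Ioo hy, (hderiv y hy).hasFDerivAt.fderiv]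
    refine ContinuousLinearMap.ext fun z => ?_
    simp
  have hx' : x ∈ Set.Ioo (-1:ℝ) 1 := by
    rcases abs_lt.mp hx with ⟨h1, h2⟩; exact ⟨h1, h2⟩
  have h0' : (0:ℝ) ∈ Set.Ioo (-1:ℝ) 1 := by norm_num
  have hcon := (convex_Ioo (-1:ℝ) 1).is_const_of_fderivWithin_eq_zero hdiff hfd hx' h0'
  have hzero : (∑' n : ℕ, bc a n * (0:ℝ) ^ n) * ((1:ℝ) + 0) ^ (-a) = 1 := by
    have ht : (∑' n : ℕ, bc a n * (0:ℝ) ^ n) = 1 := by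
      rw [tsum_eq_single 0 (fun n hn => by rw [zero_pow hn, mul_zero])]
      unfold bc; simp
    rw [ht]
    norm_num
  rw [hzero] at hcon
  have hp : (0:ℝ) < 1 + x := by have := hx'.1; linarith
  have hrp : (0:ℝ) < (1 + x) ^ a := Real.rpow_pos_of_pos hp a
  rw [Real.rpow_neg hp.le] at hcon
  field_simp at hcon
  exact hcon

lemma hqbsum (b : ℝ) {x : ℝ} (hx : |x| < 1) :
    HasSum (fun n : ℕ => qb b n * x ^ n) ((1 - x) ^ (-(|b| + 1))) := by
  have h := hasSum_binomial (-(|b|+1)) (x := -x) (by rwa [abs_neg])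
  have e : (fun n : ℕ => bc (-(|b|+1)) n * (-x) ^ n) = fun n => qb b n * x ^ n := by
    funext n
    unfold bc qb
    have e1 : (∏ i ∈ Finset.range n, (-(|b|+1) - (i:ℝ)))
        = (-1:ℝ) ^ n * ∏ i ∈ Finset.range n, (|b| + 1 + i) := by
      rw [show (fun i : ℕ => (-(|b|+1) - (i:ℝ))) = fun i : ℕ => (-1) * ((|b|+1) + i) from
        funext fun i => by ring]
      rw [Finset.prod_mul_distrib, Finset.prod_const, Finset.card_range]
    have e2 : (-x : ℝ) ^ n = (-1) ^ n * x ^ n := by rw [neg_pow]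
    have e3 : ((-1:ℝ)) ^ n * (-1 : ℝ) ^ n = 1 := by rw [← mul_pow]; norm_num
    rw [e1, e2]
    field_simp
    rw [sq, e3, one_mul]
  rw [e] at h
  have : (1 : ℝ) + -x = 1 - x := by ring
  rwa [this] at h

lemma bc_mul_eq_dFall {l : ℝ} (hl : l ≠ 0) (k : ℕ) (t : ℝ) (n : ℕ) :
    bc ((k:ℝ)/l) n * (l * t) ^ n
      = (∏ i ∈ Finset.range n, ((k:ℝ) - i * l)) * t ^ n / n.factorial := by
  have hprod : (∏ i ∈ Finset.range n, ((k:ℝ)/l - i)) * l ^ n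
      = ∏ i ∈ Finset.range n, ((k:ℝ) - i * l) := by
    have hc : l ^ n = ∏ _i ∈ Finset.range n, l := by
      rw [Finset.prod_const, Finset.card_range]
    rw [hc, ← Finset.prod_mul_distrib]
    refine Finset.prod_congr rfl fun i _ => ?_
    field_simp
  unfold bc
  rw [mul_pow]
  calc (∏ i ∈ Finset.range n, ((k:ℝ)/l - i)) / n.factorial * (l ^ n * t ^ n)
      = ((∏ i ∈ Finset.range n, ((k:ℝ)/l - i)) * l ^ n) * t ^ n / n.factorial := by ring
    _ = (∏ i ∈ Finset.range n, ((k:ℝ) - i * l)) * t ^ n / n.factorial := by rw [hprod]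

lemma summable_F {l : ℝ} (hl : l ≠ 0) {t : ℝ} (ht : |l * t| < 1) :
    Summable (fun p : ℕ × ℕ =>
      (∏ i ∈ Finset.range p.2, ((p.1 : ℝ) - i * l)) * t ^ p.2
        / ((p.1.factorial : ℝ) * p.2.factorial)) := by
  set x : ℝ := |l * t| with hxdef
  have hx0 : 0 ≤ x := abs_nonneg _
  have hx1 : x < 1 := ht
  have h1x : (0:ℝ) < 1 - x := by linarith
  have habsx : |x| < 1 := by rwa [abs_of_nonneg hx0]
  -- term identity
  have hterm : ∀ k m : ℕ,
      (∏ i ∈ Finset.range m, ((k : ℝ) - i * l)) * t ^ m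
        / ((k.factorial : ℝ) * m.factorial)
      = bc ((k:ℝ)/l) m * (l * t) ^ m / k.factorial := by
    intro k m
    rw [bc_mul_eq_dFall hl k t m, div_div, mul_comm (m.factorial : ℝ) (k.factorial : ℝ)]
  -- bound
  have hbound : ∀ k m : ℕ,
      |(∏ i ∈ Finset.range m, ((k : ℝ) - i * l)) * t ^ m
        / ((k.factorial : ℝ) * m.factorial)|
      ≤ qb ((k:ℝ)/l) m * x ^ m / k.factorial := by
    intro k m
    rw [hterm k m, abs_div, abs_of_pos (by exact_mod_cast k.factorial_pos :
        (0:ℝ) < k.factorial), abs_mul, abs_pow]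
    gcongr
    exact abs_bc_le _ m
  -- row sums
  have hrow : ∀ k : ℕ, HasSum (fun m : ℕ => qb ((k:ℝ)/l) m * x ^ m / k.factorial)
      ((1 - x) ^ (-(|(k:ℝ)/l| + 1)) / k.factorial) :=
    fun k => (hqbsum ((k:ℝ)/l) habsx).div_const _
  refine Summable.of_abs ?_
  rw [summable_prod_of_nonneg (fun p => abs_nonneg _)]
  constructor
  · intro k
    exact Summable.of_nonneg_of_le (fun m => abs_nonneg _) (hbound k) (hrow k).summable
  · -- outer
    have hval : ∀ k : ℕ, (1 - x) ^ (-(|(k:ℝ)/l| + 1)) / (k.factorial : ℝ)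
        = (1 - x) ^ (-1 : ℝ) * (((1 - x) ^ (-(1/|l|)) : ℝ) ^ k / k.factorial) := by
      intro k
      have e1 : |(k:ℝ)/l| = (k : ℝ) / |l| := by rw [abs_div, Nat.abs_cast]
      have e2 : (-(|(k:ℝ)/l| + 1)) = (-1 : ℝ) + (-(1/|l|)) * k := by
        rw [e1]; field_simp; ring
      rw [e2, Real.rpow_add h1x, Real.rpow_mul h1x.le, Real.rpow_natCast]
      ring
    refine Summable.of_nonneg_of_le (fun k => tsum_nonneg fun m => abs_nonneg _)
      (fun k => ?_)
      (((Real.summable_pow_div_factorial ((1 - x) ^ (-(1/|l|)))).mul_left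
        ((1 - x) ^ (-1 : ℝ))).congr fun k => (hval k).symm)
    calc (∑' m : ℕ, |(∏ i ∈ Finset.range m, ((k : ℝ) - i * l)) * t ^ m
          / ((k.factorial : ℝ) * m.factorial)|)
        ≤ ∑' m : ℕ, qb ((k:ℝ)/l) m * x ^ m / k.factorial := by
          refine Summable.tsum_le_tsum (hbound k) ?_ (hrow k).summable
          exact Summable.of_nonneg_of_le (fun m => abs_nonneg _) (hbound k)
            (hrow k).summable
      _ = (1 - x) ^ (-(|(k:ℝ)/l| + 1)) / k.factorial := (hrow k).tsum_eq

lemma summable_dFall_div {l : ℝ} (hl : l ≠ 0) (m : ℕ) :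
    Summable (fun k : ℕ => (∏ i ∈ Finset.range m, ((k:ℝ) - i * l)) / k.factorial) := by
  have hl0 : (0:ℝ) < |l| := abs_pos.mpr hl
  set t0 : ℝ := 1 / (2 * |l|) with ht0def
  have ht0pos : 0 < t0 := by positivity
  have ht0 : |l * t0| < 1 := by
    rw [abs_mul, abs_of_pos ht0pos, ht0def]
    rw [show |l| * (1 / (2 * |l|)) = 1/2 by field_simp]
    norm_num
  have hinj : Function.Injective (fun k : ℕ => ((k, m) : ℕ × ℕ)) := fun a b hab => by
    simpa using congrArg Prod.fst hab
  have h1 : Summable (fun k : ℕ =>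
      (∏ i ∈ Finset.range m, ((k:ℝ) - i * l)) * t0 ^ m
        / ((k.factorial : ℝ) * m.factorial)) := by
    have h0 := (summable_F hl ht0).comp_injective hinj
    exact h0.congr fun k => rfl
  have hc : (0:ℝ) < t0 ^ m / m.factorial := by
    have : (0:ℝ) < (m.factorial : ℝ) := by exact_mod_cast m.factorial_pos
    positivity
  have h2 := h1.mul_right (t0 ^ m / (m.factorial : ℝ))⁻¹
  refine h2.congr fun k => ?_
  rw [show (∏ i ∈ Finset.range m, ((k:ℝ) - i * l)) * t0 ^ m
        / ((k.factorial : ℝ) * m.factorial)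
      = ((∏ i ∈ Finset.range m, ((k:ℝ) - i * l)) / k.factorial)
        * (t0 ^ m / m.factorial) from (div_mul_div_comm _ _ _ _).symm]
  rw [mul_assoc, mul_inv_cancel₀ hc.ne', mul_one]

lemma key_hasSum {l : ℝ} (hl : l ≠ 0) {t : ℝ} (ht : |l * t| < 1) :
    HasSum (fun m : ℕ =>
        (∑' k : ℕ, (∏ i ∈ Finset.range m, ((k:ℝ) - i * l)) / k.factorial)
          * (t ^ m / m.factorial))
      (Real.exp ((1 + l * t) ^ (1 / l))) := by
  have hpos : (0:ℝ) < 1 + l * t := by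
    rcases abs_lt.mp ht with ⟨h1, h2⟩; linarith
  set F : ℕ × ℕ → ℝ := fun p =>
    (∏ i ∈ Finset.range p.2, ((p.1 : ℝ) - i * l)) * t ^ p.2
      / ((p.1.factorial : ℝ) * p.2.factorial) with hFdef
  have hF : Summable F := summable_F hl ht
  have hFs : HasSum F (∑' p, F p) := hF.hasSum
  have hterm : ∀ k n : ℕ, F (k, n) = bc ((k:ℝ)/l) n * (l * t) ^ n / k.factorial := by
    intro k n
    simp only [hFdef]
    rw [bc_mul_eq_dFall hl k t n, div_div, mul_comm (n.factorial : ℝ) (k.factorial : ℝ)]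
  have hsub : ∀ k : ℕ, HasSum (fun n : ℕ => F (k, n))
      ((1 + l * t) ^ ((k:ℝ)/l) / k.factorial) := by
    intro k
    have hb := (hasSum_binomial ((k:ℝ)/l) ht).div_const (k.factorial : ℝ)
    refine hb.congr_fun fun n => ?_
    rw [hterm k n]
  have hcol : HasSum (fun k : ℕ => (1 + l * t) ^ ((k:ℝ)/l) / k.factorial) (∑' p, F p) :=
    hFs.prod_fiberwise hsub
  have hexp : HasSum (fun k : ℕ => (1 + l * t) ^ ((k:ℝ)/l) / k.factorial)
      (Real.exp ((1 + l * t) ^ (1 / l))) := by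
    have he := NormedSpace.expSeries_div_hasSum_exp ((1 + l * t) ^ (1 / l))
    rw [← Real.exp_eq_exp_ℝ] at he
    refine he.congr_fun fun k => ?_
    congr 1
    rw [← Real.rpow_natCast ((1 + l * t) ^ (1 / l)) k, ← Real.rpow_mul hpos.le]
    congr 1
    field_simp
  have hval : (∑' p, F p) = Real.exp ((1 + l * t) ^ (1 / l)) := hcol.unique hexp
  have hFswap : HasSum (fun p : ℕ × ℕ => F (p.2, p.1)) (∑' p, F p) :=
    ((Equiv.prodComm ℕ ℕ).hasSum_iff).mpr hFs
  have hrow : ∀ m : ℕ, HasSum (fun k : ℕ => F (k, m))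
      ((∑' k : ℕ, (∏ i ∈ Finset.range m, ((k:ℝ) - i * l)) / k.factorial)
        * (t ^ m / m.factorial)) := by
    intro m
    have h := (summable_dFall_div hl m).hasSum.mul_right (t ^ m / (m.factorial : ℝ))
    refine h.congr_fun fun k => ?_
    simp only [hFdef]
    exact (div_mul_div_comm _ _ _ _).symm
  have := hFswap.prod_fiberwise hrow
  rwa [hval] at this

lemma coeff_unique {r : ℝ} (hr : 0 < r) {a b : ℕ → ℝ} {f : ℝ → ℝ}
    (ha : ∀ t : ℝ, |t| < r → HasSum (fun n : ℕ => a n * t ^ n) (f t))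
    (hb : ∀ t : ℝ, |t| < r → HasSum (fun n : ℕ => b n * t ^ n) (f t)) : a = b := by
  have key : ∀ c : ℕ → ℝ, (∀ t : ℝ, |t| < r → HasSum (fun n : ℕ => c n * t ^ n) (f t)) →
      HasFPowerSeriesAt f (FormalMultilinearSeries.ofScalars ℝ c) 0 := by
    intro c hc
    refine ⟨ENNReal.ofReal (r/2), ?_, ENNReal.ofReal_pos.mpr (by linarith), ?_⟩
    · -- radius bound
      have h34 : |3*r/4| < r := by rw [abs_of_pos (by linarith)]; linarith
      have hz := ((hc (3*r/4) h34).summable).tendsto_atTop_zero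
      have habs : Tendsto (fun n : ℕ => |c n * (3*r/4) ^ n|) atTop (nhds 0) := by
        have := hz.abs; rwa [abs_zero] at this
      have hev : ∀ᶠ n in atTop, |c n * (3*r/4) ^ n| ≤ 1 :=
        habs.eventually_le_const one_pos
      have hor : (ENNReal.ofReal (r/2)) = (((r/2).toNNReal : ℝ≥0) : ℝ≥0∞) := rfl
      rw [hor]
      apply FormalMultilinearSeries.le_radius_of_summable
      have hco : (((r/2).toNNReal : ℝ≥0) : ℝ) = r/2 := Real.coe_toNNReal _ (by linarith)
      simp_rw [FormalMultilinearSeries.ofScalars_norm, hco]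
      refine Summable.of_norm_bounded_eventually (g := fun n : ℕ => ((2:ℝ)/3) ^ n)
        (summable_geometric_of_lt_one (by norm_num) (by norm_num)) ?_
      rw [Nat.cofinite_eq_atTop]
      filter_upwards [hev] with n hn
      have h34n : (0:ℝ) ≤ (3*r/4) ^ n := by positivity
      have e1 : ((r:ℝ)/2) ^ n = (3*r/4) ^ n * (2/3) ^ n := by
        rw [← mul_pow]; congr 1; ring
      rw [Real.norm_eq_abs, abs_of_nonneg (by positivity), Real.norm_eq_abs, e1]
      have e2 : |c n| * ((3*r/4) ^ n * (2/3) ^ n) = (|c n| * (3*r/4) ^ n) * (2/3) ^ n := by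
        ring
      rw [e2]
      have e3 : |c n| * (3*r/4) ^ n ≤ 1 := by
        rw [← abs_of_nonneg h34n, ← abs_mul]; exact hn
      calc (|c n| * (3*r/4) ^ n) * (2/3) ^ n ≤ 1 * (2/3) ^ n :=
            mul_le_mul_of_nonneg_right e3 (by positivity)
        _ = (2/3) ^ n := one_mul _
    · intro y hy
      rw [EMetric.mem_ball, edist_lt_ofReal, dist_zero_right, Real.norm_eq_abs] at hy
      simp only [FormalMultilinearSeries.ofScalars_apply_eq, smul_eq_mul, zero_add]
      exact hc y (by linarith)
  exact FormalMultilinearSeries.ofScalars_series_injective ℝ ℝ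
    ((key a ha).eq_formalMultilinearSeries (key b hb))

end Dob

end Aux

theorem degenerate_bell_numbers_dobinski (l : ℝ) (hl : l ≠ 0)
    (φ : ℕ → ℝ → ℝ)
    (hφ : ∀ x t : ℝ, |l * t| < 1 →
      HasSum (fun n : ℕ => φ n x * t ^ n / (n.factorial : ℝ))
        (Real.exp (x * (degExp l 1 t - 1))))
    (n : ℕ) :
    HasSum (fun k : ℕ => dFall l (k : ℝ) n / (k.factorial : ℝ))
      (Real.exp 1 * φ n 1) := by
  classical
  have hl0 : (0:ℝ) < |l| := abs_pos.mpr hl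
  set S : ℕ → ℝ := fun m => ∑' k : ℕ,
    (∏ i ∈ Finset.range m, ((k:ℝ) - i * l)) / k.factorial with hSdef
  have hr : (0:ℝ) < 1/|l| := by positivity
  have hsmall : ∀ t : ℝ, |t| < 1/|l| → |l * t| < 1 := by
    intro t htt
    rw [abs_mul]
    calc |l| * |t| < |l| * (1/|l|) := mul_lt_mul_of_pos_left htt hl0
      _ = 1 := by field_simp
  have ha : ∀ t : ℝ, |t| < 1/|l| →
      HasSum (fun m : ℕ => (φ m 1 / m.factorial) * t ^ m)
        (Real.exp (1 * (degExp l 1 t - 1))) := by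
    intro t htt
    have h := hφ 1 t (hsmall t htt)
    refine h.congr_fun fun m => ?_
    ring
  have hb : ∀ t : ℝ, |t| < 1/|l| →
      HasSum (fun m : ℕ => ((Real.exp 1)⁻¹ * S m / m.factorial) * t ^ m)
        (Real.exp (1 * (degExp l 1 t - 1))) := by
    intro t htt
    have hk := (Dob.key_hasSum hl (hsmall t htt)).mul_left (Real.exp 1)⁻¹
    have hval : (Real.exp 1)⁻¹ * Real.exp ((1 + l * t) ^ (1 / l))
        = Real.exp (1 * (degExp l 1 t - 1)) := by
      rw [one_mul]
      unfold degExp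
      rw [Real.exp_sub]
      ring
    rw [hval] at hk
    refine hk.congr_fun fun m => ?_
    simp only [hSdef]
    ring
  have heq := Dob.coeff_unique hr ha hb
  have hn := congrFun heq n
  have hfac : ((n.factorial : ℝ)) ≠ 0 := by exact_mod_cast n.factorial_ne_zero
  have hphi : φ n 1 = (Real.exp 1)⁻¹ * S n := by
    have h2 : φ n 1 / (n.factorial : ℝ) * n.factorial
        = (Real.exp 1)⁻¹ * S n / (n.factorial : ℝ) * n.factorial := by rw [hn]
    rwa [div_mul_cancel₀ _ hfac, div_mul_cancel₀ _ hfac] at h2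
  have hfinal : Real.exp 1 * φ n 1 = S n := by
    rw [hphi, ← mul_assoc, mul_inv_cancel₀ (Real.exp_ne_zero 1), one_mul]
  rw [hfinal]
  simpa only [dFall, hSdef] using (Dob.summable_dFall_div hl n).hasSum
end

section
/- The degenerate Bell polynomials satisfy the binomial identity φ_{n,λ}(x+y) = ∑_{k=0}^n C(n,k) φ_{k,λ}(x) φ_{n-k,λ}(y) for all n ≥ 0 and all real x, y. -/
open Real MeasureTheory ProbabilityTheory Filter Asymptotics

lemma aux_hasFPowerSeriesAt (a : ℕ → ℝ) (f : ℝ → ℝ) (r : ℝ) (hr : 0 < r)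
    (ha : ∀ t : ℝ, |t| < r → HasSum (fun n : ℕ => a n * t ^ n) (f t)) :
    HasFPowerSeriesAt f (FormalMultilinearSeries.ofScalars ℝ a) 0 := by
  have hr2 : (0:ℝ) < r / 2 := by linarith
  refine ⟨((r/2).toNNReal : ENNReal), ?_, ?_, ?_⟩
  · -- radius bound
    apply FormalMultilinearSeries.le_radius_of_summable
    have hs : Summable fun n : ℕ => |a n * (r/2) ^ n| := by
      rw [summable_abs_iff]
      exact (ha (r/2) (by rw [abs_of_pos hr2]; linarith)).summable
    apply Summable.of_nonneg_of_le (fun n => by positivity) _ hs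
    intro n
    have h1 : ‖FormalMultilinearSeries.ofScalars ℝ a n‖ ≤ |a n| :=
      le_of_eq (by rw [FormalMultilinearSeries.ofScalars_norm, Real.norm_eq_abs])
    have h2 : ((r/2).toNNReal : ℝ) = r/2 := Real.coe_toNNReal _ hr2.le
    rw [h2, abs_mul, abs_pow, abs_of_pos hr2]
    exact mul_le_mul_of_nonneg_right h1 (by positivity)
  · exact ENNReal.coe_pos.mpr (Real.toNNReal_pos.mpr hr2)
  · intro t ht
    rw [mem_emetric_ball_zero_iff, enorm_eq_nnnorm, ENNReal.coe_lt_coe, ← Real.toNNReal_coe (r := ‖t‖₊),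
      Real.toNNReal_lt_toNNReal_iff hr2, coe_nnnorm, Real.norm_eq_abs] at ht
    simp only [zero_add, FormalMultilinearSeries.ofScalars_apply_eq, smul_eq_mul]
    exact ha t (by linarith)

lemma aux_coeff_eq (a b : ℕ → ℝ) (f : ℝ → ℝ) (r : ℝ) (hr : 0 < r)
    (ha : ∀ t : ℝ, |t| < r → HasSum (fun n : ℕ => a n * t ^ n) (f t))
    (hb : ∀ t : ℝ, |t| < r → HasSum (fun n : ℕ => b n * t ^ n) (f t)) : a = b :=
  FormalMultilinearSeries.ofScalars_series_injective ℝ ℝ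
    ((aux_hasFPowerSeriesAt a f r hr ha).eq_formalMultilinearSeries
      (aux_hasFPowerSeriesAt b f r hr hb))


theorem degenerate_bell_binomial_identity (l : ℝ) (hl : l ≠ 0)
    (φ : ℕ → ℝ → ℝ)
    (hφ : ∀ x t : ℝ, |l * t| < 1 →
      HasSum (fun n : ℕ => φ n x * t ^ n / (n.factorial : ℝ))
        (Real.exp (x * (degExp l 1 t - 1))))
    (n : ℕ) (x y : ℝ) :
    φ n (x + y) = ∑ k ∈ Finset.range (n + 1), (n.choose k : ℝ) * φ k x * φ (n - k) y := by

  have habs : (0:ℝ) < |l| := abs_pos.mpr hl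
  have hr : (0:ℝ) < |l|⁻¹ := inv_pos.mpr habs
  have hsmall : ∀ t : ℝ, |t| < |l|⁻¹ → |l * t| < 1 := by
    intro t ht
    rw [abs_mul]
    calc |l| * |t| < |l| * |l|⁻¹ := by exact mul_lt_mul_of_pos_left ht habs
      _ = 1 := mul_inv_cancel₀ habs.ne'
  have key : (fun n : ℕ => φ n (x + y) / (n.factorial : ℝ)) =
      fun n : ℕ => (∑ k ∈ Finset.range (n + 1), (n.choose k : ℝ) * φ k x * φ (n - k) y) /
        (n.factorial : ℝ) := by
    apply aux_coeff_eq _ _ (fun t => Real.exp ((x + y) * (degExp l 1 t - 1))) _ hr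
    · intro t ht
      have heq : (fun n : ℕ => φ n (x + y) / (n.factorial : ℝ) * t ^ n) =
          fun n : ℕ => φ n (x + y) * t ^ n / (n.factorial : ℝ) := by
        funext n; ring
      rw [heq]
      exact hφ (x + y) t (hsmall t ht)
    · intro t ht
      have hx := hφ x t (hsmall t ht)
      have hy := hφ y t (hsmall t ht)
      have hxs : Summable fun n : ℕ => ‖φ n x * t ^ n / (n.factorial : ℝ)‖ :=
        summable_norm_iff.mpr hx.summable
      have hys : Summable fun n : ℕ => ‖φ n y * t ^ n / (n.factorial : ℝ)‖ :=
        summable_norm_iff.mpr hy.summable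
      have H := hasSum_sum_range_mul_of_summable_norm hxs hys
      rw [hx.tsum_eq, hy.tsum_eq, ← Real.exp_add] at H
      have he : x * (degExp l 1 t - 1) + y * (degExp l 1 t - 1)
          = (x + y) * (degExp l 1 t - 1) := by ring
      rw [he] at H
      have heq : (fun n : ℕ => ∑ k ∈ Finset.range (n + 1),
            (φ k x * t ^ k / (k.factorial : ℝ)) *
              (φ (n - k) y * t ^ (n - k) / ((n - k).factorial : ℝ))) =
          fun n : ℕ => (∑ k ∈ Finset.range (n + 1),
            (n.choose k : ℝ) * φ k x * φ (n - k) y) / (n.factorial : ℝ) * t ^ n := by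
        funext n
        rw [Finset.sum_div, Finset.sum_mul]
        apply Finset.sum_congr rfl
        intro k hk
        have hkn : k ≤ n := Nat.lt_succ_iff.mp (Finset.mem_range.mp hk)
        have htk : t ^ k * t ^ (n - k) = t ^ n := by
          rw [← pow_add, Nat.add_sub_cancel' hkn]
        have e1 : (k.factorial : ℝ) ≠ 0 := Nat.cast_ne_zero.mpr k.factorial_ne_zero
        have e2 : ((n - k).factorial : ℝ) ≠ 0 := Nat.cast_ne_zero.mpr (n - k).factorial_ne_zero
        have e3 : ((n).factorial : ℝ) ≠ 0 := Nat.cast_ne_zero.mpr n.factorial_ne_zero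
        rw [Nat.cast_choose ℝ hkn, ← htk]
        field_simp
      rw [← heq]
      exact H
  have hfin := congrFun key n
  have e3 : ((n).factorial : ℝ) ≠ 0 := Nat.cast_ne_zero.mpr n.factorial_ne_zero
  field_simp at hfin
  exact hfin
end

section
/- For all n ≥ 0, φ_{n,λ}(x) = ∑_{k=0}^n S_{2,λ}(n,k) x^k, where S_{2,λ}(n,k) are the degenerate Stirling numbers of the second kind. -/
open Real MeasureTheory ProbabilityTheory Filter Asymptotics

noncomputable def binomR (b : ℝ) (n : ℕ) : ℝ := (∏ i ∈ Finset.range n, (b - i)) / n.factorial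

lemma binomR_zero (b : ℝ) : binomR b 0 = 1 := by simp [binomR]

lemma binomR_succ (b : ℝ) (n : ℕ) : binomR b (n+1) = (b - n) / (n+1) * binomR b n := by
  have h1 : ((n:ℝ)+1) ≠ 0 := by positivity
  have h2 : ((n.factorial : ℝ)) ≠ 0 := Nat.cast_ne_zero.2 n.factorial_ne_zero
  rw [binomR, binomR, Finset.prod_range_succ, Nat.factorial_succ]
  push_cast
  field_simp

lemma summable_binomR_aux (b : ℝ) {ρ : ℝ} (h0 : 0 ≤ ρ) (h1 : ρ < 1) :
    Summable (fun n : ℕ => ((n : ℝ) + 1) * |binomR b n| * ρ ^ n) := by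
  set r : ℝ := (1 + ρ) / 2 with hr
  have hρr : ρ < r := by rw [hr]; linarith
  have hr1 : r < 1 := by rw [hr]; linarith
  apply summable_of_ratio_norm_eventually_le hr1
  have hc : Filter.Tendsto
      (fun n : ℕ => (1 + 1/((n:ℝ)+1)) * (1 + (|b|-1)/((n:ℝ)+1)) * ρ) Filter.atTop
      (nhds ((1 + 0) * (1 + 0) * ρ)) := by
    apply Filter.Tendsto.mul_const
    apply Filter.Tendsto.mul
    · exact (tendsto_const_nhds.add (tendsto_one_div_add_atTop_nhds_zero_nat))
    · have : Filter.Tendsto (fun n : ℕ => (|b|-1) * (1/((n:ℝ)+1))) Filter.atTop (nhds ((|b|-1)*0)) :=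
        (tendsto_one_div_add_atTop_nhds_zero_nat).const_mul (|b|-1)
      rw [mul_zero] at this
      exact tendsto_const_nhds.add (this.congr (fun n => by ring))
  have hlt : ∀ᶠ n : ℕ in Filter.atTop,
      (1 + 1/((n:ℝ)+1)) * (1 + (|b|-1)/((n:ℝ)+1)) * ρ < r := by
    apply hc.eventually_lt_const
    simpa using hρr
  have hge : ∀ᶠ n : ℕ in Filter.atTop, b ≤ (n:ℝ) := by
    filter_upwards [Filter.eventually_ge_atTop ⌈b⌉₊] with n hn
    calc b ≤ (⌈b⌉₊ : ℝ) := Nat.le_ceil b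
    _ ≤ n := by exact_mod_cast hn
  filter_upwards [hlt, hge] with n hn hbn
  have hn1 : (0:ℝ) < (n:ℝ) + 1 := by positivity
  have habs : |b - (n:ℝ)| ≤ (n:ℝ) + |b| := by
    rw [abs_sub_comm, abs_of_nonneg (by linarith)]
    have := neg_abs_le b
    linarith
  have hX : (0:ℝ) ≤ |binomR b n| * ρ ^ n := by positivity
  have key : ((n:ℝ)+2) * |b - n| * ρ / ((n:ℝ)+1) ≤ r * ((n:ℝ)+1) := by
    have e1 : (1 + 1/((n:ℝ)+1)) * (1 + (|b|-1)/((n:ℝ)+1)) * ρ * ((n:ℝ)+1)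
        = ((n:ℝ)+2) * ((n:ℝ) + |b|) * ρ / ((n:ℝ)+1) := by
      field_simp
      ring
    have e2 : ((n:ℝ)+2) * |b - n| * ρ / ((n:ℝ)+1) ≤ ((n:ℝ)+2) * ((n:ℝ)+|b|) * ρ / ((n:ℝ)+1) := by
      apply div_le_div_of_nonneg_right ?_ hn1.le |>.trans_eq rfl
      · apply mul_le_mul_of_nonneg_right _ h0
        apply mul_le_mul_of_nonneg_left habs (by positivity)
    calc ((n:ℝ)+2) * |b - n| * ρ / ((n:ℝ)+1) ≤ ((n:ℝ)+2) * ((n:ℝ)+|b|) * ρ / ((n:ℝ)+1) := e2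
    _ = (1 + 1/((n:ℝ)+1)) * (1 + (|b|-1)/((n:ℝ)+1)) * ρ * ((n:ℝ)+1) := e1.symm
    _ ≤ r * ((n:ℝ)+1) := by
        apply mul_le_mul_of_nonneg_right (le_of_lt hn) (le_of_lt hn1)
  -- now the main inequality
  have lhs_eq : ‖((((n:ℕ)+1:ℕ):ℝ)+1) * |binomR b (n+1)| * ρ ^ (n+1)‖
      = (((n:ℝ)+2) * |b - n| * ρ / ((n:ℝ)+1)) * (|binomR b n| * ρ^n) := by
    rw [Real.norm_eq_abs, abs_of_nonneg (by positivity), binomR_succ, abs_mul, abs_div,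
      abs_of_pos hn1, pow_succ]
    push_cast
    ring
  have rhs_eq : ‖((n:ℝ)+1) * |binomR b n| * ρ^n‖ = ((n:ℝ)+1) * |binomR b n| * ρ^n := by
    rw [Real.norm_eq_abs]; exact abs_of_nonneg (by positivity)
  rw [lhs_eq, rhs_eq]
  calc (((n:ℝ)+2) * |b - n| * ρ / ((n:ℝ)+1)) * (|binomR b n| * ρ^n)
      ≤ (r * ((n:ℝ)+1)) * (|binomR b n| * ρ^n) := mul_le_mul_of_nonneg_right key hX
  _ = r * (((n:ℝ)+1) * |binomR b n| * ρ^n) := by ring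

open Filter
section
variable (b : ℝ)

lemma binomR_summable (b : ℝ) {ρ y : ℝ} (h0 : 0 ≤ ρ) (h1 : ρ < 1) (hy : |y| ≤ ρ) :
    Summable (fun n : ℕ => binomR b n * y ^ n) := by
  apply Summable.of_norm_bounded (summable_binomR_aux b h0 h1)
  intro n
  rw [Real.norm_eq_abs, abs_mul, abs_pow]
  calc |binomR b n| * |y| ^ n ≤ |binomR b n| * ρ ^ n := by
        apply mul_le_mul_of_nonneg_left (pow_le_pow_left₀ (abs_nonneg y) hy n) (abs_nonneg _)
  _ ≤ ((n:ℝ)+1) * (|binomR b n| * ρ ^ n) := by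
      have h2 : (1:ℝ) ≤ (n:ℝ)+1 := by
        have := Nat.cast_nonneg (α := ℝ) n; linarith
      exact le_mul_of_one_le_left (by positivity) h2
  _ = ((n:ℝ)+1) * |binomR b n| * ρ ^ n := by ring

lemma binomR_hasSum (b : ℝ) {u : ℝ} (hu : |u| < 1) :
    HasSum (fun n : ℕ => binomR b n * u ^ n) ((1 + u) ^ b) := by
  set ρ : ℝ := (|u| + 1) / 2 with hρ
  have h0 : 0 ≤ ρ := by positivity
  have hρ1 : ρ < 1 := by rw [hρ]; linarith
  have huρ : |u| < ρ := by rw [hρ]; linarith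
  have hρpos : 0 < ρ := by rw [hρ]; positivity
  set G : ℝ → ℝ := fun z => ∑' n : ℕ, binomR b n * z ^ n with hG
  set D : ℝ → ℝ := fun z => ∑' n : ℕ, binomR b n * ((n:ℝ) * z ^ (n-1)) with hD
  -- derivative of G
  have hsum' : ∀ y : ℝ, |y| ≤ ρ →
      Summable (fun n : ℕ => binomR b n * ((n:ℝ) * y ^ (n-1))) := by
    intro y hy
    apply Summable.of_norm_bounded ((summable_binomR_aux b h0 hρ1).mul_left ρ⁻¹)
    intro n
    rw [Real.norm_eq_abs, abs_mul, abs_mul, abs_pow, Nat.abs_cast]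
    match n with
    | 0 => simp; positivity
    | (m+1) =>
      simp only [Nat.add_sub_cancel]
      push_cast
      have hyρ : |y| ^ m ≤ ρ ^ m := pow_le_pow_left₀ (abs_nonneg y) hy m
      calc |binomR b (m+1)| * (((m:ℝ)+1) * |y| ^ m)
          ≤ |binomR b (m+1)| * (((m:ℝ)+1) * ρ ^ m) := by
            apply mul_le_mul_of_nonneg_left _ (abs_nonneg _)
            apply mul_le_mul_of_nonneg_left hyρ (by positivity)
      _ = ρ⁻¹ * (((m:ℝ)+1+1) * |binomR b (m+1)| * ρ ^ (m+1)) * (((m:ℝ)+1)/((m:ℝ)+2)) := by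
            rw [pow_succ]
            field_simp
            ring
      _ ≤ ρ⁻¹ * (((m:ℝ)+1+1) * |binomR b (m+1)| * ρ ^ (m+1)) * 1 := by
            apply mul_le_mul_of_nonneg_left _ (by positivity)
            rw [div_le_one (by positivity)]; linarith
      _ = ρ⁻¹ * (((m:ℝ)+1+1) * |binomR b (m+1)| * ρ ^ (m+1)) := by ring
  have hderiv : ∀ y ∈ Metric.ball (0:ℝ) ρ, HasDerivAt G (D y) y := by
    intro y hy
    apply hasDerivAt_tsum_of_isPreconnected
      ((summable_binomR_aux b h0 hρ1).mul_left ρ⁻¹) Metric.isOpen_ball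
      (convex_ball (0:ℝ) ρ).isPreconnected
      (g := fun n z => binomR b n * z ^ n)
      (g' := fun n z => binomR b n * ((n:ℝ) * z ^ (n-1)))
      (fun n z _ => (hasDerivAt_pow n z).const_mul (binomR b n))
      ?_ (Metric.mem_ball_self hρpos) ?_ hy
    · intro n z hz
      rw [Metric.mem_ball, Real.dist_eq, sub_zero] at hz
      -- same bound as hsum'
      rw [Real.norm_eq_abs, abs_mul, abs_mul, abs_pow, Nat.abs_cast]
      match n with
      | 0 => simp; positivity
      | (m+1) =>
        simp only [Nat.add_sub_cancel]
        push_cast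
        have hyρ : |z| ^ m ≤ ρ ^ m := pow_le_pow_left₀ (abs_nonneg z) hz.le m
        calc |binomR b (m+1)| * (((m:ℝ)+1) * |z| ^ m)
            ≤ |binomR b (m+1)| * (((m:ℝ)+1) * ρ ^ m) := by
              apply mul_le_mul_of_nonneg_left _ (abs_nonneg _)
              apply mul_le_mul_of_nonneg_left hyρ (by positivity)
        _ = ρ⁻¹ * (((m:ℝ)+1+1) * |binomR b (m+1)| * ρ ^ (m+1)) * (((m:ℝ)+1)/((m:ℝ)+2)) := by
              rw [pow_succ]
              field_simp
              ring
        _ ≤ ρ⁻¹ * (((m:ℝ)+1+1) * |binomR b (m+1)| * ρ ^ (m+1)) * 1 := by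
              apply mul_le_mul_of_nonneg_left _ (by positivity)
              rw [div_le_one (by positivity)]; linarith
        _ = ρ⁻¹ * (((m:ℝ)+1+1) * |binomR b (m+1)| * ρ ^ (m+1)) := by ring
    · exact binomR_summable b h0 hρ1 (by simpa using hρpos.le)
  -- the ODE identity
  have hkey : ∀ y : ℝ, |y| < ρ → b * G y = (1 + y) * D y := by
    intro y hy
    have hDsum : HasSum (fun n : ℕ => binomR b n * ((n:ℝ) * y ^ (n-1))) (D y) :=
      (hsum' y hy.le).hasSum
    have h1 : HasSum (fun n : ℕ => (n:ℝ) * binomR b n * y ^ n) (y * D y) := by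
      have h := hDsum.mul_left y
      have e : (fun n : ℕ => y * (binomR b n * ((n:ℝ) * y ^ (n-1))))
          = fun n : ℕ => (n:ℝ) * binomR b n * y ^ n := by
        funext n
        match n with
        | 0 => simp
        | (m+1) =>
          simp only [Nat.add_sub_cancel]
          push_cast
          rw [pow_succ]
          ring
      rwa [e] at h
    have h2 : HasSum (fun n : ℕ => (b - (n:ℝ)) * binomR b n * y ^ n) (D y) := by
      have h := (hasSum_nat_add_iff
        (f := fun n : ℕ => binomR b n * ((n:ℝ) * y ^ (n-1))) 1).2 (by simpa using hDsum)
      have e : (fun n : ℕ => binomR b (n+1) * (((n+1:ℕ):ℝ) * y ^ (n+1-1)))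
          = fun n : ℕ => (b - (n:ℝ)) * binomR b n * y ^ n := by
        funext n
        rw [binomR_succ]
        have : ((n:ℝ)+1) ≠ 0 := by positivity
        simp only [Nat.add_sub_cancel]
        push_cast
        field_simp
      rwa [e] at h
    have h3 : HasSum (fun n : ℕ => b * (binomR b n * y ^ n)) (D y + y * D y) := by
      have h := h2.add h1
      have e : (fun n : ℕ => (b - (n:ℝ)) * binomR b n * y ^ n + (n:ℝ) * binomR b n * y ^ n)
          = fun n : ℕ => b * (binomR b n * y ^ n) := by
        funext n; ring
      rwa [e] at h
    have h4 : HasSum (fun n : ℕ => binomR b n * y ^ n) (G y) :=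
      (binomR_summable b h0 hρ1 hy.le).hasSum
    have := (h4.mul_left b).unique h3
    rw [this]; ring
  -- H is constant
  set H : ℝ → ℝ := fun y => G y * (1+y) ^ (-b) with hH
  have hHderiv : ∀ y : ℝ, |y| < ρ → HasDerivAt H 0 y := by
    intro y hy
    obtain ⟨hy1, hy2⟩ := abs_lt.1 hy
    have hpos : 0 < 1 + y := by linarith
    have hg := hderiv y (by rw [Metric.mem_ball, Real.dist_eq, sub_zero]; exact hy)
    have hr1 : HasDerivAt (fun z : ℝ => (1+z) ^ (-b)) (-b * (1+y)^(-b-1) * 1) y := by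
      have hpow : HasDerivAt (fun w : ℝ => w ^ (-b)) (-b * (1+y)^(-b-1)) (1+y) := by
        simpa using Real.hasDerivAt_rpow_const (x := 1+y) (p := -b) (Or.inl hpos.ne')
      exact hpow.comp y ((hasDerivAt_id y).const_add 1)
    have hmul := hg.mul hr1
    have key := hkey y hy
    have hrw : (1+y) ^ (-b-1) * (1+y) = (1+y) ^ (-b) := by
      rw [← Real.rpow_add_one hpos.ne' (-b-1)]
      ring_nf
    have : D y * (1+y)^(-b) + G y * (-b * (1+y)^(-b-1) * 1) = 0 := by
      linear_combination (-((1+y)^(-b-1))) * key + (-(D y)) * hrw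
    rw [← this]
    exact hmul
  have hconst : H u = H 0 := by
    rcases le_or_gt 0 u with hu0 | hu0
    · have habs : ∀ y ∈ Set.Icc (0:ℝ) u, |y| < ρ := by
        intro y hy
        rw [abs_lt]
        constructor <;> [linarith [hy.1]; linarith [hy.2, (abs_lt.1 huρ).2, abs_of_nonneg hu0]]
      exact constant_of_has_deriv_right_zero
        (fun y hy => (hHderiv y (habs y hy)).continuousAt.continuousWithinAt)
        (fun y hy => (hHderiv y (habs y (Set.mem_Icc.2 ⟨hy.1, hy.2.le⟩))).hasDerivWithinAt)
        u (Set.mem_Icc.2 ⟨hu0, le_refl u⟩)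
    · have habs : ∀ y ∈ Set.Icc u (0:ℝ), |y| < ρ := by
        intro y hy
        rw [abs_lt]
        have := (abs_lt.1 huρ).1
        constructor <;> [linarith [hy.1]; linarith [hy.2]]
      exact (constant_of_has_deriv_right_zero
        (fun y hy => (hHderiv y (habs y hy)).continuousAt.continuousWithinAt)
        (fun y hy => (hHderiv y (habs y (Set.mem_Icc.2 ⟨hy.1, hy.2.le⟩))).hasDerivWithinAt)
        0 (Set.mem_Icc.2 ⟨hu0.le, le_refl (0:ℝ)⟩)).symm
  have hG0 : G 0 = 1 := by
    have hs : HasSum (fun n : ℕ => binomR b n * (0:ℝ)^n) 1 := by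
      have h := hasSum_single (f := fun n : ℕ => binomR b n * (0:ℝ)^n) 0 ?_
      · simpa [binomR_zero] using h
      · intro n hn
        match n with
        | 0 => exact absurd rfl hn
        | (m+1) => simp
    exact hs.tsum_eq
  obtain ⟨hu1, hu2⟩ := abs_lt.1 hu
  have hupos : 0 < 1 + u := by linarith
  have hGu : G u = (1+u) ^ b := by
    have h2 : G u * (1+u)^(-b) = 1 := by
      have : H u = 1 := by
        rw [hconst, hH]
        simp [hG0]
      simpa [hH] using this
    have h3 : (1+u)^(-b) = ((1+u)^b)⁻¹ := Real.rpow_neg hupos.le b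
    have h4 : ((1:ℝ)+u)^b ≠ 0 := (Real.rpow_pos_of_pos hupos b).ne'
    rw [h3] at h2
    field_simp at h2
    exact h2
  rw [← hGu]
  exact (binomR_summable b h0 hρ1 huρ.le).hasSum
end


lemma real_exp_hasSum (x : ℝ) : HasSum (fun n : ℕ => x ^ n / n.factorial) (Real.exp x) := by
  rw [Real.exp_eq_exp_ℝ]
  exact NormedSpace.expSeries_div_hasSum_exp x

lemma dFall_eq_binomR (l : ℝ) (hl : l ≠ 0) (a t : ℝ) (n : ℕ) :
    dFall l a n * t ^ n / n.factorial = binomR (a/l) n * (l*t) ^ n := by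
  have h : dFall l a n = l ^ n * ∏ i ∈ Finset.range n, (a/l - i) := by
    rw [dFall, show (l:ℝ)^n = ∏ _i ∈ Finset.range n, l by
      rw [Finset.prod_const, Finset.card_range], ← Finset.prod_mul_distrib]
    exact Finset.prod_congr rfl (fun i _ => by field_simp)
  rw [h, binomR, mul_pow]
  ring

lemma dFall_one_nat (k m : ℕ) : dFall 1 (k:ℝ) m = (k.descFactorial m : ℝ) := by
  induction m with
  | zero => simp [dFall]
  | succ m ih =>
    rw [dFall, Finset.prod_range_succ, ← dFall, ih, Nat.descFactorial_succ]
    rcases lt_or_ge m k with h | h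
    · push_cast [h.le]
      ring
    · rcases eq_or_lt_of_le h with rfl | hlt
      · simp
      · have h0 : k.descFactorial m = 0 := Nat.descFactorial_eq_zero_iff_lt.2 hlt
        rw [h0]
        simp

lemma dFall_abs_le (l : ℝ) (hl : l ≠ 0) (k : ℕ) (t : ℝ) (n : ℕ) :
    |dFall l (k:ℝ) n * t ^ n / n.factorial| ≤ binomR (-((k:ℝ) / |l|)) n * (-|l * t|) ^ n := by
  have hl' : (0:ℝ) < |l| := abs_pos.2 hl
  have hRHS : binomR (-((k:ℝ)/|l|)) n * (-|l*t|)^n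
      = (∏ i ∈ Finset.range n, ((k:ℝ) + i * |l|)) * |t|^n / n.factorial := by
    have e1 : (∏ i ∈ Finset.range n, (-((k:ℝ)/|l|) - (i:ℝ))) * (-|l*t|)^n
        = (∏ i ∈ Finset.range n, ((k:ℝ) + i * |l|)) * |t|^n := by
      rw [show (-|l*t|)^n = ∏ _i ∈ Finset.range n, (-|l*t|) by
        rw [Finset.prod_const, Finset.card_range],
        show (|t|:ℝ)^n = ∏ _i ∈ Finset.range n, |t| by
        rw [Finset.prod_const, Finset.card_range],
        ← Finset.prod_mul_distrib, ← Finset.prod_mul_distrib]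
      apply Finset.prod_congr rfl
      intro i _
      rw [abs_mul]
      field_simp
      ring
    rw [binomR, div_mul_eq_mul_div, e1]
  rw [hRHS, abs_div, abs_mul, abs_pow, Nat.abs_cast]
  have hnum : |dFall l (k:ℝ) n| ≤ ∏ i ∈ Finset.range n, ((k:ℝ) + i * |l|) := by
    rw [dFall, Finset.abs_prod]
    apply Finset.prod_le_prod (fun i _ => abs_nonneg _)
    intro i _
    calc |(k:ℝ) - i * l| ≤ |(k:ℝ)| + |(i:ℝ) * l| := abs_sub _ _
    _ = (k:ℝ) + i * |l| := by rw [Nat.abs_cast, abs_mul, Nat.abs_cast]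
  gcongr

lemma descFactorial_mul_factorial (k m : ℕ) :
    (((k+m).descFactorial m : ℕ) : ℝ) * k.factorial = ((k+m).factorial : ℝ) := by
  induction m with
  | zero => simp
  | succ m ih =>
    have h1 : k + (m+1) = (k + m) + 1 := by ring
    rw [h1, Nat.succ_descFactorial_succ, Nat.factorial_succ]
    push_cast
    push_cast at ih
    linear_combination ((k:ℝ) + m + 1) * ih

lemma col_hasSum (m : ℕ) (x : ℝ) :
    HasSum (fun k : ℕ => x ^ k * (k.descFactorial m : ℝ) / k.factorial)
      (x ^ m * Real.exp x) := by
  have h : HasSum (fun k : ℕ => x ^ (k+m) * ((k+m).descFactorial m : ℝ) / (k+m).factorial)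
      (x ^ m * Real.exp x) := by
    have he := (real_exp_hasSum x).mul_left (x ^ m)
    have e : (fun k : ℕ => x ^ (k+m) * ((k+m).descFactorial m : ℝ) / (k+m).factorial)
        = fun k : ℕ => x ^ m * (x ^ k / k.factorial) := by
      funext k
      have hf := descFactorial_mul_factorial k m
      have h1 : (((k+m).factorial : ℕ) : ℝ) ≠ 0 := Nat.cast_ne_zero.2 (Nat.factorial_ne_zero _)
      have h2 : ((k.factorial : ℕ) : ℝ) ≠ 0 := Nat.cast_ne_zero.2 (Nat.factorial_ne_zero _)
      rw [pow_add]
      field_simp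
      linear_combination (x^k * x^m) * hf
    rw [e]
    exact he
  have h3 := (hasSum_nat_add_iff
    (f := fun k : ℕ => x ^ k * (k.descFactorial m : ℝ) / k.factorial) m).1 h
  have hz : (∑ i ∈ Finset.range m, x ^ i * (i.descFactorial m : ℝ) / i.factorial) = 0 :=
    Finset.sum_eq_zero (fun i hi => by
      rw [Nat.descFactorial_eq_zero_iff_lt.2 (Finset.mem_range.1 hi)]
      simp)
  rw [hz, add_zero] at h3
  exact h3


lemma col_hasSum2 (l : ℝ) (hl : l ≠ 0) (S : ℕ → ℕ → ℝ)
    (hS : ∀ (n : ℕ) (x : ℝ), dFall l x n = ∑ k ∈ Finset.range (n + 1), S n k * dFall 1 x k)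
    (x t : ℝ) (n : ℕ) :
    HasSum (fun k : ℕ => x ^ k / k.factorial * (dFall l (k:ℝ) n * t ^ n / n.factorial))
      (Real.exp x * ((∑ m ∈ Finset.range (n+1), S n m * x ^ m) * t ^ n / n.factorial)) := by
  have hterm : (fun k : ℕ => x ^ k / k.factorial * (dFall l (k:ℝ) n * t ^ n / n.factorial))
      = fun k : ℕ => ∑ m ∈ Finset.range (n+1),
        (S n m * t ^ n / n.factorial) * (x ^ k * (k.descFactorial m : ℝ) / k.factorial) := by
    funext k
    rw [hS n (k:ℝ), Finset.sum_mul, Finset.sum_div, Finset.mul_sum]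
    apply Finset.sum_congr rfl
    intro m _
    rw [dFall_one_nat]
    ring
  rw [hterm]
  have hsum : HasSum (fun k : ℕ => ∑ m ∈ Finset.range (n+1),
      (S n m * t ^ n / n.factorial) * (x ^ k * (k.descFactorial m : ℝ) / k.factorial))
      (∑ m ∈ Finset.range (n+1), (S n m * t ^ n / n.factorial) * (x ^ m * Real.exp x)) :=
    hasSum_sum (fun m _ => (col_hasSum m x).mul_left _)
  have hv : (∑ m ∈ Finset.range (n+1), (S n m * t^n / n.factorial) * (x^m * Real.exp x))
      = Real.exp x * ((∑ m ∈ Finset.range (n+1), S n m * x^m) * t^n / n.factorial) := by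
    rw [Finset.sum_mul, Finset.sum_div, Finset.mul_sum]
    exact Finset.sum_congr rfl (fun m _ => by ring)
  rw [hv] at hsum
  exact hsum

set_option maxHeartbeats 1000000 in
lemma key_hasSum (l : ℝ) (hl : l ≠ 0) (S : ℕ → ℕ → ℝ)
    (hS : ∀ (n : ℕ) (x : ℝ), dFall l x n = ∑ k ∈ Finset.range (n + 1), S n k * dFall 1 x k)
    (x t : ℝ) (ht : |l * t| < 1) :
    HasSum (fun n : ℕ => (∑ k ∈ Finset.range (n+1), S n k * x ^ k) * t ^ n / n.factorial)
      (Real.exp (x * (degExp l 1 t - 1))) := by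
  have hl' : (0:ℝ) < |l| := abs_pos.2 hl
  obtain ⟨htl1, htl2⟩ := abs_lt.1 ht
  have hpos : (0:ℝ) < 1 + l * t := by linarith
  have h1m : (0:ℝ) < 1 - |l * t| := by linarith [abs_lt.1 ht]
  set e : ℝ := (1 + l * t) ^ (1 / l) with he
  -- row sums
  have hrow : ∀ a : ℝ, HasSum (fun n : ℕ => dFall l a n * t ^ n / n.factorial)
      ((1 + l*t) ^ (a / l)) := by
    intro a
    have h := binomR_hasSum (a / l) (u := l * t) ht
    have e1 : (fun n : ℕ => binomR (a/l) n * (l*t) ^ n)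
        = fun n : ℕ => dFall l a n * t ^ n / n.factorial :=
      funext fun n => (dFall_eq_binomR l hl a t n).symm
    rwa [e1] at h
  set F : ℕ × ℕ → ℝ :=
    fun p => x ^ p.1 / p.1.factorial * (dFall l (p.1:ℝ) p.2 * t ^ p.2 / p.2.factorial) with hF
  have hmt : |(-|l * t|)| < 1 := by rwa [abs_neg, abs_abs]
  have hrowAbs : ∀ k : ℕ, HasSum (fun n : ℕ => binomR (-((k:ℝ)/|l|)) n * (-|l*t|) ^ n)
      ((1 - |l*t|) ^ (-((k:ℝ)/|l|))) := by
    intro k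
    have h := binomR_hasSum (-((k:ℝ)/|l|)) (u := -|l*t|) hmt
    rwa [show (1:ℝ) + -|l*t| = 1 - |l*t| by ring] at h
  have hFbound : ∀ k n : ℕ, |F (k, n)|
      ≤ |x|^k / k.factorial * (binomR (-((k:ℝ)/|l|)) n * (-|l*t|) ^ n) := by
    intro k n
    rw [hF]
    simp only
    rw [abs_mul, abs_div, abs_pow, Nat.abs_cast]
    exact mul_le_mul_of_nonneg_left (dFall_abs_le l hl k t n) (by positivity)
  -- summability of |F|
  have habs : Summable (fun p : ℕ × ℕ => |F p|) := by
    rw [summable_prod_of_nonneg (fun p => abs_nonneg _)]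
    constructor
    · intro k
      exact Summable.of_nonneg_of_le (fun n => abs_nonneg _) (hFbound k)
        (((hrowAbs k).summable).mul_left (|x|^k / k.factorial))
    · set C : ℝ := (1 - |l*t|) ^ (-(1/|l|)) with hC
      have hCpos : 0 < C := Real.rpow_pos_of_pos h1m _
      apply Summable.of_nonneg_of_le (f := fun k : ℕ => |x|^k / k.factorial * C^k)
        (fun k => tsum_nonneg (fun n => abs_nonneg _)) ?_ ?_
      · intro k
        have hrs : Summable (fun n : ℕ => |x|^k / k.factorial
            * (binomR (-((k:ℝ)/|l|)) n * (-|l*t|) ^ n)) :=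
          ((hrowAbs k).summable).mul_left _
        calc ∑' n : ℕ, |F (k, n)|
            ≤ ∑' n : ℕ, |x|^k / k.factorial * (binomR (-((k:ℝ)/|l|)) n * (-|l*t|) ^ n) := by
              apply Summable.tsum_le_tsum (hFbound k) ?_ hrs
              exact Summable.of_nonneg_of_le (fun n => abs_nonneg _) (hFbound k) hrs
        _ = |x|^k / k.factorial * ((1 - |l*t|) ^ (-((k:ℝ)/|l|))) :=
              ((hrowAbs k).mul_left _).tsum_eq
        _ = |x|^k / k.factorial * C^k := by
              rw [hC, ← Real.rpow_natCast ((1 - |l*t|) ^ (-(1/|l|))) k,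
                ← Real.rpow_mul h1m.le]
              congr 1
              field_simp
      · apply (Real.summable_pow_div_factorial (|x| * C)).congr
        intro k
        rw [mul_pow]
        ring
  have hFsummable : Summable F := habs.of_abs
  have hfiber : HasSum (fun k : ℕ => x^k / k.factorial * ((1 + l*t) ^ (((k:ℕ):ℝ)/l)))
      (∑' p, F p) :=
    hFsummable.hasSum.prod_fiberwise (fun k => (hrow k).mul_left _)
  have hexp2 : HasSum (fun k : ℕ => x^k / k.factorial * ((1 + l*t) ^ (((k:ℕ):ℝ)/l)))
      (Real.exp (x * e)) := by
    have hes := real_exp_hasSum (x * e)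
    have epe : (fun k : ℕ => (x*e)^k / k.factorial)
        = fun k : ℕ => x^k / k.factorial * ((1 + l*t) ^ (((k:ℕ):ℝ)/l)) := by
      funext k
      rw [mul_pow]
      have : e ^ k = (1 + l*t) ^ (((k:ℕ):ℝ)/l) := by
        rw [he, ← Real.rpow_natCast ((1 + l*t) ^ (1/l)) k, ← Real.rpow_mul hpos.le]
        congr 1
        ring
      rw [this]
      ring
    rwa [epe] at hes
  have htotal : (∑' p, F p) = Real.exp (x * e) := hfiber.unique hexp2
  rw [htotal] at hfiber
  have hswap : HasSum (fun p : ℕ × ℕ => F (p.2, p.1)) (Real.exp (x * e)) := by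
    have hFe : HasSum F (Real.exp (x * e)) := htotal ▸ hFsummable.hasSum
    have h := ((Equiv.prodComm ℕ ℕ).hasSum_iff (f := F)).2 hFe
    exact h
  have hcol : ∀ n : ℕ, HasSum (fun k : ℕ => F (k, n))
      (Real.exp x * ((∑ m ∈ Finset.range (n+1), S n m * x ^ m) * t ^ n / n.factorial)) :=
    fun n => col_hasSum2 l hl S hS x t n
  have hfinal := hswap.prod_fiberwise hcol
  have hlast := hfinal.mul_left (Real.exp (-x))
  have e2 : (fun n : ℕ => Real.exp (-x) * (Real.exp x *
      ((∑ m ∈ Finset.range (n+1), S n m * x ^ m) * t ^ n / n.factorial)))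
      = fun n : ℕ => (∑ m ∈ Finset.range (n+1), S n m * x ^ m) * t ^ n / n.factorial := by
    funext n
    rw [← mul_assoc, ← Real.exp_add, neg_add_cancel, Real.exp_zero, one_mul]
  rw [e2] at hlast
  have e3 : Real.exp (-x) * Real.exp (x * e) = Real.exp (x * (degExp l 1 t - 1)) := by
    rw [← Real.exp_add, degExp, ← he]
    congr 1
    ring
  rwa [e3] at hlast

lemma coeff_unique {f : ℝ → ℝ} {c d : ℕ → ℝ} {r : ℝ} (hr : 0 < r)
    (hc : ∀ t : ℝ, |t| < r → HasSum (fun n : ℕ => c n * t ^ n) (f t))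
    (hd : ∀ t : ℝ, |t| < r → HasSum (fun n : ℕ => d n * t ^ n) (f t)) : c = d := by
  have main : ∀ (c : ℕ → ℝ), (∀ t : ℝ, |t| < r → HasSum (fun n : ℕ => c n * t ^ n) (f t)) →
      HasFPowerSeriesAt f (FormalMultilinearSeries.ofScalars ℝ c) 0 := by
    intro c hc
    have hr2 : (0:ℝ) < r/2 := by linarith
    have ht₀ : |r/2| < r := by rw [abs_of_pos hr2]; linarith
    have hbdd : BddAbove (Set.range (fun n : ℕ => |c n * (r/2) ^ n|)) := by
      have h := (hc (r/2) ht₀).summable.tendsto_atTop_zero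
      exact h.abs.bddAbove_range
    obtain ⟨C, hC⟩ := hbdd
    set rnn : NNReal := ⟨r/2, hr2.le⟩ with hrnn
    have hrad : (rnn : ENNReal) ≤ (FormalMultilinearSeries.ofScalars ℝ c).radius := by
      apply FormalMultilinearSeries.le_radius_of_bound _ C
      intro n
      rw [FormalMultilinearSeries.ofScalars_norm]
      have he : ‖c n‖ * ((rnn : ℝ))^n = |c n * (r/2) ^ n| := by
        rw [Real.norm_eq_abs, abs_mul, abs_pow, abs_of_pos hr2]
        rfl
      rw [he]
      exact hC (Set.mem_range_self n)
    refine ⟨(rnn : ENNReal), hrad, ?_, ?_⟩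
    · exact_mod_cast ENNReal.coe_pos.2 (show (0:NNReal) < rnn from hr2)
    · intro y hy
      rw [mem_emetric_ball_zero_iff, enorm_eq_nnnorm, ENNReal.coe_lt_coe] at hy
      have hy' : |y| < r := by
        have h2 : ‖y‖ < ((rnn : ℝ)) := hy
        rw [Real.norm_eq_abs] at h2
        have : ((rnn : ℝ)) = r/2 := rfl
        linarith [this ▸ h2]
      have hsum := hc y hy'
      rw [zero_add]
      have e : (fun n : ℕ => (FormalMultilinearSeries.ofScalars ℝ c n) fun _ => y)
          = fun n : ℕ => c n * y ^ n := by
        funext n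
        rw [FormalMultilinearSeries.ofScalars_apply_eq, smul_eq_mul]
      rw [e]
      exact hsum
  have h1 := main c hc
  have h2 := main d hd
  have h3 := h1.eq_formalMultilinearSeries h2
  exact (FormalMultilinearSeries.ofScalars_series_eq_iff ℝ c d).1 h3

theorem degenerate_bell_eq_sum_degenerate_stirling (l : ℝ) (hl : l ≠ 0)
    (φ : ℕ → ℝ → ℝ)
    (hφ : ∀ x t : ℝ, |l * t| < 1 →
      HasSum (fun n : ℕ => φ n x * t ^ n / (n.factorial : ℝ))
        (Real.exp (x * (degExp l 1 t - 1))))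
    (S : ℕ → ℕ → ℝ)
    (hS : ∀ (n : ℕ) (x : ℝ), dFall l x n = ∑ k ∈ Finset.range (n + 1), S n k * dFall 1 x k)
    (n : ℕ) (x : ℝ) :
    φ n x = ∑ k ∈ Finset.range (n + 1), S n k * x ^ k := by
  have hl' : (0:ℝ) < |l| := abs_pos.2 hl
  have hr : (0:ℝ) < 1/|l| := by positivity
  have hmul : ∀ t : ℝ, |t| < 1/|l| → |l * t| < 1 := by
    intro t ht
    rw [abs_mul]
    calc |l| * |t| < |l| * (1/|l|) := by
          exact mul_lt_mul_of_pos_left ht hl'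
    _ = 1 := by field_simp
  have hφ' : ∀ t : ℝ, |t| < 1/|l| → HasSum (fun m : ℕ => (φ m x / m.factorial) * t ^ m)
      (Real.exp (x * (degExp l 1 t - 1))) := by
    intro t ht
    have h := hφ x t (hmul t ht)
    have e : (fun m : ℕ => φ m x * t ^ m / m.factorial)
        = fun m : ℕ => (φ m x / m.factorial) * t ^ m := funext fun m => by ring
    rwa [e] at h
  have hS' : ∀ t : ℝ, |t| < 1/|l| → HasSum
      (fun m : ℕ => ((∑ k ∈ Finset.range (m+1), S m k * x ^ k) / m.factorial) * t ^ m)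
      (Real.exp (x * (degExp l 1 t - 1))) := by
    intro t ht
    have h := key_hasSum l hl S hS x t (hmul t ht)
    have e : (fun m : ℕ => (∑ k ∈ Finset.range (m+1), S m k * x ^ k) * t ^ m / m.factorial)
        = fun m : ℕ => ((∑ k ∈ Finset.range (m+1), S m k * x ^ k) / m.factorial) * t ^ m :=
      funext fun m => by ring
    rwa [e] at h
  have heq := coeff_unique hr hφ' hS'
  have hn := congrFun heq n
  have hfac : ((n.factorial : ℕ) : ℝ) ≠ 0 := Nat.cast_ne_zero.2 (Nat.factorial_ne_zero n)
  field_simp at hn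
  exact hn
end

section
/- If X₁, ..., Xₙ are independent random variables with Xᵢ ∼ DB_λ(αᵢ, θ) (all with the same parameter θ), then the sum Y = X₁ + ⋯ + Xₙ has the degenerate Bell distribution DB_λ(α₁+⋯+αₙ, θ). -/
open Real MeasureTheory ProbabilityTheory Filter Asymptotics

lemma aux_norm_ofScalars (c : ℕ → ℝ) (n : ℕ) :
    ‖FormalMultilinearSeries.ofScalars ℝ c n‖ = |c n| := by
  rw [FormalMultilinearSeries.ofScalars,
    norm_smul (c n) (ContinuousMultilinearMap.mkPiAlgebraFin ℝ n ℝ),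
    ContinuousMultilinearMap.norm_mkPiAlgebraFin, Real.norm_eq_abs, mul_one]

section Aux
variable {l : ℝ} (hl0 : 0 < l) {φ : ℕ → ℝ → ℝ}
  (hφ : ∀ x t : ℝ, 0 < 1 + l * t →
      HasSum (fun n : ℕ => φ n x * t ^ n / (n.factorial : ℝ))
        (Real.exp (x * (degExp l 1 t - 1))))

include hl0 hφ in
lemma aux_bound (x : ℝ) : ∃ M : ℝ, 0 ≤ M ∧ ∀ n : ℕ, |φ n x / n.factorial| ≤ M * l ^ n := by
  have h2 : (0:ℝ) < 1 + l * (1/l) := by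
    rw [mul_one_div, div_self hl0.ne']; norm_num
  have hs := (hφ x (1/l) h2).summable
  have htend := hs.tendsto_atTop_zero
  have hbdd : BddAbove (Set.range fun n => |φ n x * (1/l) ^ n / n.factorial|) :=
    (htend.abs.bddAbove_range)
  obtain ⟨M, hM⟩ := hbdd
  refine ⟨M, le_trans (abs_nonneg _) (hM ⟨0, rfl⟩), fun n => ?_⟩
  have hMn : |φ n x * (1/l) ^ n / n.factorial| ≤ M := hM ⟨n, rfl⟩
  have hrw : φ n x * (1/l) ^ n / n.factorial = (φ n x / n.factorial) * (1/l) ^ n := by ring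
  have hpabs : |(1/l:ℝ)^n| = (1/l)^n := abs_of_pos (by positivity)
  rw [hrw, abs_mul, hpabs] at hMn
  have huv : (1/l) ^ n * l ^ n = 1 := by
    rw [← mul_pow]; field_simp; exact one_pow n
  nlinarith [pow_pos hl0 n, abs_nonneg (φ n x / (n.factorial:ℝ))]

include hl0 in
omit hφ in
lemma aux_summable_norm (x : ℝ) {M : ℝ} (hM : ∀ n : ℕ, |φ n x / n.factorial| ≤ M * l ^ n)
    {t : ℝ} (ht : l * |t| < 1) :
    Summable fun n : ℕ => ‖φ n x / n.factorial * t ^ n‖ := by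
  refine Summable.of_nonneg_of_le (fun n => norm_nonneg _) (fun n => ?_)
    ((summable_geometric_of_lt_one (by positivity) ht).mul_left M)
  rw [Real.norm_eq_abs, abs_mul, abs_pow]
  calc |φ n x / n.factorial| * |t| ^ n ≤ (M * l ^ n) * |t| ^ n :=
        mul_le_mul_of_nonneg_right (hM n) (by positivity)
    _ = M * (l * |t|) ^ n := by rw [mul_pow]; ring

include hl0 hφ in
lemma aux_hasF (x : ℝ) {M : ℝ} (hM : ∀ n : ℕ, |φ n x / n.factorial| ≤ M * l ^ n) :
    HasFPowerSeriesOnBall (fun t => Real.exp (x * (degExp l 1 t - 1)))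
    (FormalMultilinearSeries.ofScalars ℝ (fun n => φ n x / n.factorial)) 0
    (ENNReal.ofReal (1/l)) := by
  refine ⟨?_, ENNReal.ofReal_pos.mpr (by positivity), ?_⟩
  · rw [ENNReal.ofReal]
    refine FormalMultilinearSeries.le_radius_of_bound _ M (fun n => ?_)
    rw [aux_norm_ofScalars, Real.coe_toNNReal _ (by positivity)]
    calc |φ n x / n.factorial| * (1/l) ^ n ≤ (M * l ^ n) * (1/l) ^ n :=
          mul_le_mul_of_nonneg_right (hM n) (by positivity)
      _ = M * (l * (1/l)) ^ n := by rw [mul_pow]; ring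
      _ = M := by rw [mul_one_div, div_self hl0.ne', one_pow, mul_one]
  · intro y hy
    rw [EMetric.mem_ball, edist_dist, ENNReal.ofReal_lt_ofReal_iff (by positivity)] at hy
    rw [Real.dist_eq, sub_zero] at hy
    have hpos : 0 < 1 + l * y := by
      have h1 : l * |y| < 1 := by
        have := mul_lt_mul_of_pos_left hy hl0
        rwa [mul_one_div, div_self hl0.ne'] at this
      nlinarith [neg_abs_le y, abs_nonneg y]
    have heq : (fun n => (FormalMultilinearSeries.ofScalars ℝ
        (fun n => φ n x / n.factorial) n) fun _ => y)
        = fun n => φ n x * y ^ n / n.factorial := by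
      funext n
      rw [FormalMultilinearSeries.ofScalars_apply_eq, smul_eq_mul]
      ring
    rw [zero_add, heq]
    exact hφ x y hpos

include hl0 hφ in
lemma aux_phi_add (x y : ℝ) (k : ℕ) :
    φ k (x + y) = ∑ j ∈ Finset.range (k+1),
      (k.choose j : ℝ) * φ j x * φ (k-j) y := by
  classical
  obtain ⟨Mx, hMx0, hMx⟩ := aux_bound hl0 hφ x
  obtain ⟨My, hMy0, hMy⟩ := aux_bound hl0 hφ y
  obtain ⟨Mz, hMz0, hMz⟩ := aux_bound hl0 hφ (x + y)
  set c : ℝ → ℕ → ℝ := fun a n => φ n a / n.factorial with hc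
  set q := FormalMultilinearSeries.ofScalars ℝ
    (fun n => ∑ j ∈ Finset.range (n+1), c x j * c y (n - j)) with hqdef
  have hq : HasFPowerSeriesOnBall (fun t => Real.exp ((x+y) * (degExp l 1 t - 1))) q 0
      (ENNReal.ofReal (1/(2*l))) := by
    refine ⟨?_, ENNReal.ofReal_pos.mpr (by positivity), ?_⟩
    · rw [ENNReal.ofReal]
      refine FormalMultilinearSeries.le_radius_of_bound _ (2*(Mx*My)) (fun n => ?_)
      rw [hqdef, aux_norm_ofScalars, Real.coe_toNNReal _ (by positivity)]
      have h1 : |∑ j ∈ Finset.range (n+1), c x j * c y (n-j)| ≤ ((n:ℝ)+1) * (Mx*My*l^n) := by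
        calc |∑ j ∈ Finset.range (n+1), c x j * c y (n-j)|
            ≤ ∑ j ∈ Finset.range (n+1), |c x j * c y (n-j)| :=
              Finset.abs_sum_le_sum_abs _ _
          _ ≤ ∑ _j ∈ Finset.range (n+1), Mx*My*l^n := by
              refine Finset.sum_le_sum (fun j hj => ?_)
              have hjn : j ≤ n := Finset.mem_range_succ_iff.mp hj
              rw [abs_mul]
              calc |c x j| * |c y (n-j)| ≤ (Mx * l ^ j) * (My * l ^ (n-j)) :=
                    mul_le_mul (hMx j) (hMy (n-j)) (abs_nonneg _) (by positivity)
                _ = Mx*My*l^n := by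
                    have hpw : l ^ j * l ^ (n - j) = l ^ n := by
                      rw [← pow_add l j (n-j), Nat.add_sub_cancel' hjn]
                    calc Mx * l ^ j * (My * l ^ (n-j)) = Mx * My * (l^j * l^(n-j)) := by ring
                      _ = Mx*My*l^n := by rw [hpw]
          _ = ((n:ℝ)+1) * (Mx*My*l^n) := by
              rw [Finset.sum_const, Finset.card_range, nsmul_eq_mul]; push_cast; ring
      have h2 : ((n:ℝ)+1) * (1/2:ℝ)^n ≤ 2 := by
        have h3 : ((n:ℝ)+1) ≤ 2 ^ (n+1) := by exact_mod_cast (Nat.lt_two_pow_self (n := n+1)).le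
        have h4 : ((n:ℝ)+1) * (1/2)^n ≤ (2^(n+1)) * (1/2)^n :=
          mul_le_mul_of_nonneg_right h3 (by positivity)
        calc ((n:ℝ)+1) * (1/2)^n ≤ (2^(n+1)) * (1/2)^n := h4
          _ = 2 * (2 * (1/2))^n := by rw [pow_succ, mul_pow]; ring
          _ = 2 := by norm_num
      have h5 : ((1:ℝ)/(2*l)) ^ n = (1/2)^n * (1/l)^n := by
        rw [← mul_pow]; congr 1; field_simp
      have h6 : (l:ℝ)^n * (1/l)^n = 1 := by rw [← mul_pow]; field_simp; exact one_pow n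
      calc |∑ j ∈ Finset.range (n+1), c x j * c y (n-j)| * (1/(2*l)) ^ n
          ≤ (((n:ℝ)+1) * (Mx*My*l^n)) * (1/(2*l)) ^ n :=
            mul_le_mul_of_nonneg_right h1 (by positivity)
        _ = (((n:ℝ)+1) * (1/2)^n) * (Mx*My) * (l^n * (1/l)^n) := by rw [h5]; ring
        _ = (((n:ℝ)+1) * (1/2)^n) * (Mx*My) := by rw [h6, mul_one]
        _ ≤ 2*(Mx*My) := mul_le_mul_of_nonneg_right h2 (mul_nonneg hMx0 hMy0)
    · intro t ht
      rw [EMetric.mem_ball, edist_dist, ENNReal.ofReal_lt_ofReal_iff (by positivity)] at ht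
      rw [Real.dist_eq, sub_zero] at ht
      have ht1 : l * |t| < 1 := by
        have := mul_lt_mul_of_pos_left ht hl0
        rw [mul_one_div] at this
        calc l * |t| < l / (2*l) := this
          _ = 1/2 := by field_simp
          _ < 1 := by norm_num
      have hpos : 0 < 1 + l * t := by nlinarith [neg_abs_le t, abs_nonneg t]
      have hSx := aux_summable_norm hl0 (φ := φ) x hMx ht1
      have hSy := aux_summable_norm hl0 (φ := φ) y hMy ht1
      have hprod := hasSum_sum_range_mul_of_summable_norm
        (f := fun n => c x n * t^n) (g := fun n => c y n * t^n) hSx hSy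
      have hex : (fun n => c x n * t ^ n) = fun n => φ n x * t^n / n.factorial := by
        funext n; simp only [hc]; ring
      have hey : (fun n => c y n * t ^ n) = fun n => φ n y * t^n / n.factorial := by
        funext n; simp only [hc]; ring
      have htx : ∑' n, c x n * t ^ n = Real.exp (x * (degExp l 1 t - 1)) := by
        rw [hex]; exact (hφ x t hpos).tsum_eq
      have hty : ∑' n, c y n * t ^ n = Real.exp (y * (degExp l 1 t - 1)) := by
        rw [hey]; exact (hφ y t hpos).tsum_eq
      rw [htx, hty, ← Real.exp_add] at hprod
      have hval : x * (degExp l 1 t - 1) + y * (degExp l 1 t - 1)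
          = (x+y) * (degExp l 1 t - 1) := by ring
      rw [hval] at hprod
      have hterm : (fun n => (q n) fun _ => t)
          = fun n => ∑ j ∈ Finset.range (n+1), (c x j * t^j) * (c y (n-j) * t^(n-j)) := by
        funext n
        rw [hqdef, FormalMultilinearSeries.ofScalars_apply_eq, smul_eq_mul, Finset.sum_mul]
        refine Finset.sum_congr rfl (fun j hj => ?_)
        have hjn : j ≤ n := Finset.mem_range_succ_iff.mp hj
        rw [show c x j * c y (n - j) * t ^ n = c x j * c y (n-j) * (t^j * t^(n-j)) by
          rw [← pow_add t j (n-j), Nat.add_sub_cancel' hjn]]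
        ring
      rw [zero_add, hterm]
      exact hprod
  have hz := aux_hasF hl0 hφ (x+y) hMz
  have heq := hz.hasFPowerSeriesAt.eq_formalMultilinearSeries hq.hasFPowerSeriesAt
  have hcoeff : (fun n => φ n (x+y) / n.factorial)
      = fun n => ∑ j ∈ Finset.range (n+1), c x j * c y (n - j) :=
    (FormalMultilinearSeries.ofScalars_series_eq_iff (E := ℝ) _ _).mp heq
  have hk := congrFun hcoeff k
  have hkfac : (0:ℝ) < k.factorial := by exact_mod_cast k.factorial_pos
  have : φ k (x+y) = (∑ j ∈ Finset.range (k+1), c x j * c y (k - j)) * k.factorial := by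
    rw [← hk]; field_simp
  rw [this, Finset.sum_mul]
  refine Finset.sum_congr rfl (fun j hj => ?_)
  have hjk : j ≤ k := Finset.mem_range_succ_iff.mp hj
  have hch : (k.choose j : ℝ) = k.factorial / (j.factorial * (k-j).factorial) :=
    Nat.cast_choose ℝ hjk
  have hjf : (0:ℝ) < j.factorial := by exact_mod_cast j.factorial_pos
  have hkjf : (0:ℝ) < (k-j).factorial := by exact_mod_cast (k-j).factorial_pos
  simp only [hc]
  rw [hch]
  field_simp

include hl0 hφ in
lemma aux_phi_zero (n : ℕ) : φ n 0 = if n = 0 then 1 else 0 := by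
  classical
  obtain ⟨M, hM0, hM⟩ := aux_bound hl0 hφ 0
  set q := FormalMultilinearSeries.ofScalars ℝ
    (fun m : ℕ => if m = 0 then (1:ℝ) else 0) with hqdef
  have hq : HasFPowerSeriesOnBall (fun t => Real.exp (0 * (degExp l 1 t - 1))) q 0
      (ENNReal.ofReal (1/l)) := by
    refine ⟨?_, ENNReal.ofReal_pos.mpr (by positivity), ?_⟩
    · rw [ENNReal.ofReal]
      refine FormalMultilinearSeries.le_radius_of_bound _ 1 (fun m => ?_)
      rw [hqdef, aux_norm_ofScalars]
      rcases Nat.eq_zero_or_pos m with hm | hm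
      · subst hm; simp
      · rw [if_neg hm.ne']; simp
    · intro t _
      have h1 : HasSum (fun m : ℕ => if m = 0 then (1:ℝ) else 0) 1 := hasSum_ite_eq 0 1
      have hterm : (fun m => (q m) fun _ => t) = fun m : ℕ => if m = 0 then (1:ℝ) else 0 := by
        funext m
        rw [hqdef, FormalMultilinearSeries.ofScalars_apply_eq, smul_eq_mul]
        rcases Nat.eq_zero_or_pos m with hm|hm
        · subst hm; simp
        · simp [hm.ne']
      rw [zero_add, hterm, zero_mul, Real.exp_zero]
      exact h1
  have hz := aux_hasF hl0 hφ 0 hM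
  have heq := hz.hasFPowerSeriesAt.eq_formalMultilinearSeries hq.hasFPowerSeriesAt
  have hcoeff := (FormalMultilinearSeries.ofScalars_series_eq_iff (E := ℝ) _ _).mp heq
  have hn := congrFun hcoeff n
  rcases Nat.eq_zero_or_pos n with h|h
  · subst h; simpa using hn
  · rw [if_neg h.ne']
    rw [if_neg h.ne'] at hn
    have hfne : ((n.factorial : ℝ)) ≠ 0 := by positivity
    exact (div_eq_zero_iff.mp hn).resolve_right hfne

end Aux

lemma aux_conv2 {Ω : Type*} [MeasurableSpace Ω] (P : Measure Ω) (A B : Ω → ℕ)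
    (hA : Measurable A) (hB : Measurable B) (hAB : IndepFun A B P) (k : ℕ) :
    P {ω | A ω + B ω = k}
      = ∑ j ∈ Finset.range (k+1), P {ω | A ω = j} * P {ω | B ω = k - j} := by
  have hset : {ω | A ω + B ω = k}
      = ⋃ j ∈ Finset.range (k+1), (A ⁻¹' {j} ∩ B ⁻¹' {k - j}) := by
    ext ω
    simp only [Set.mem_setOf_eq, Set.mem_iUnion, Finset.mem_range, Set.mem_inter_iff,
      Set.mem_preimage, Set.mem_singleton_iff]
    constructor
    · intro h
      exact ⟨A ω, by omega, rfl, by omega⟩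
    · rintro ⟨j, hj, h1, h2⟩
      omega
  rw [hset, measure_biUnion_finset ?_ ?_]
  · refine Finset.sum_congr rfl (fun j hj => ?_)
    exact hAB.measure_inter_preimage_eq_mul _ _
      (measurableSet_singleton _) (measurableSet_singleton _)
  · intro i _ j _ hij
    refine Set.disjoint_left.mpr ?_
    rintro ω ⟨h1, _⟩ ⟨h2, _⟩
    simp only [Set.mem_preimage, Set.mem_singleton_iff] at h1 h2
    omega
  · intro j _
    exact (hA (measurableSet_singleton _)).inter (hB (measurableSet_singleton _))

lemma aux_nonneg_of_prob {Ω : Type*} [MeasurableSpace Ω] (P : Measure Ω)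
    [IsProbabilityMeasure P] (Y : Ω → ℕ) (hY : Measurable Y) (t : ℕ → ℝ)
    (hP : ∀ k, P {ω | Y ω = k} = ENNReal.ofReal (t k))
    (ht : HasSum t 1) : ∀ k, 0 ≤ t k := by
  by_contra h
  push_neg at h
  obtain ⟨m, hm⟩ := h
  have h2 : ∑' k : ℕ, P {ω | Y ω = k} = 1 := by
    have hdis : Pairwise (Function.onFun Disjoint fun k : ℕ => Y ⁻¹' {k}) := by
      intro i j hij
      refine Set.disjoint_left.mpr ?_
      intro ω h1 h2
      simp only [Set.mem_preimage, Set.mem_singleton_iff] at h1 h2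
      omega
    have hmu := measure_iUnion (μ := P) hdis (fun k => hY (measurableSet_singleton k))
    have huniv : (⋃ k : ℕ, Y ⁻¹' {k}) = Set.univ := by
      ext ω; simp
    rw [huniv, measure_univ] at hmu
    exact hmu.symm
  have h2' : ∑' k : ℕ, ENNReal.ofReal (t k) = 1 := by
    rw [← h2]; exact tsum_congr (fun k => (hP k).symm)
  set u : ℕ → ℝ := fun k => max (t k) 0 with hu
  have hofu : ∀ k, ENNReal.ofReal (t k) = ENNReal.ofReal (u k) := by
    intro k
    rcases le_total 0 (t k) with h'|h'
    · simp only [hu, max_eq_left h']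
    · rw [ENNReal.ofReal_of_nonpos h']
      simp only [hu, max_eq_right h', ENNReal.ofReal_zero]
  have h3 : ∑' k : ℕ, ENNReal.ofReal (u k) = 1 := by
    rw [← h2']; exact tsum_congr (fun k => (hofu k).symm)
  have hsummu : Summable u := by
    have := ENNReal.summable_toReal (by rw [h3]; exact ENNReal.one_ne_top)
    refine this.congr (fun k => ?_)
    exact ENNReal.toReal_ofReal (le_max_right _ _)
  have htsumu : ∑' k, u k = 1 := by
    have h4 := ENNReal.tsum_toReal_eq (f := fun k => ENNReal.ofReal (u k))
      (fun k => ENNReal.ofReal_ne_top)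
    rw [h3, ENNReal.toReal_one] at h4
    rw [h4]
    exact tsum_congr (fun k => (ENNReal.toReal_ofReal (le_max_right (t k) 0)).symm)
  have hlt : ∑' k, t k < ∑' k, u k := by
    refine Summable.tsum_lt_tsum (fun k => le_max_left _ _) (i := m) ?_ ht.summable hsummu
    have hum : u m = 0 := max_eq_right hm.le
    rw [hum]; exact hm
  rw [ht.tsum_eq, htsumu] at hlt
  exact lt_irrefl 1 hlt

lemma aux_real_conv (φ : ℕ → ℝ → ℝ) (E a b θ : ℝ) (k : ℕ)
    (hadd : φ k (b + a) = ∑ j ∈ Finset.range (k+1),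
      (k.choose j : ℝ) * φ j b * φ (k-j) a) :
    ∑ j ∈ Finset.range (k+1),
      Real.exp (-(b*E)) * θ^j * φ j b / (j.factorial : ℝ)
        * (Real.exp (-(a*E)) * θ^(k-j) * φ (k-j) a / ((k-j).factorial : ℝ))
      = Real.exp (-((b + a)*E)) * θ^k * φ k (b + a) / (k.factorial : ℝ) := by
  rw [hadd, Finset.mul_sum, Finset.sum_div]
  refine Finset.sum_congr rfl (fun j hj => ?_)
  have hjk : j ≤ k := Finset.mem_range_succ_iff.mp hj
  have hch : (k.choose j : ℝ) = k.factorial / (j.factorial * (k-j).factorial) :=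
    Nat.cast_choose ℝ hjk
  have hpw : θ^j * θ^(k-j) = θ^k := by
    rw [← pow_add θ j (k-j), Nat.add_sub_cancel' hjk]
  have hexp : Real.exp (-((b + a)*E)) = Real.exp (-(b*E)) * Real.exp (-(a*E)) := by
    rw [← Real.exp_add]; congr 1; ring
  have hjf : (0:ℝ) < j.factorial := by exact_mod_cast j.factorial_pos
  have hkjf : (0:ℝ) < (k-j).factorial := by exact_mod_cast (k-j).factorial_pos
  have hkf : (0:ℝ) < k.factorial := by exact_mod_cast k.factorial_pos
  rw [hexp, hch, ← hpw]
  field_simp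

theorem degenerate_bell_sum_of_family (l θ : ℝ) (hl : l ∈ Set.Ioc (0 : ℝ) 1) (hθ : 0 < θ)
    (φ : ℕ → ℝ → ℝ)
    (hφ : ∀ x t : ℝ, 0 < 1 + l * t →
      HasSum (fun n : ℕ => φ n x * t ^ n / (n.factorial : ℝ))
        (Real.exp (x * (degExp l 1 t - 1))))
    {Ω : Type*} [MeasurableSpace Ω] (P : Measure Ω) [IsProbabilityMeasure P]
    (n : ℕ) (α : Fin n → ℝ) (hα : ∀ i, 0 < α i)
    (X : Fin n → Ω → ℕ) (hXmeas : ∀ i, Measurable (X i))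
    (hindep : iIndepFun X P)
    (hX : ∀ i, ∀ k : ℕ, P {ω | X i ω = k} =
      ENNReal.ofReal (Real.exp (-(α i * (degExp l 1 θ - 1))) * θ ^ k * φ k (α i) / (k.factorial : ℝ))) :
    ∀ k : ℕ, P {ω | (∑ i, X i ω) = k} =
      ENNReal.ofReal (Real.exp (-((∑ i, α i) * (degExp l 1 θ - 1))) * θ ^ k *
        φ k (∑ i, α i) / (k.factorial : ℝ)) := by
  classical
  obtain ⟨hl0, hl1⟩ := hl
  have hθpos : (0:ℝ) < 1 + l * θ := by positivity
  set E : ℝ := degExp l 1 θ - 1 with hE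
  -- nonnegativity of φ k (α i)
  have hnn : ∀ i k, 0 ≤ φ k (α i) := by
    intro i
    have h1 : (fun k : ℕ => Real.exp (-(α i * E)) * (φ k (α i) * θ^k / k.factorial))
        = fun k : ℕ => Real.exp (-(α i * E)) * θ^k * φ k (α i) / k.factorial := by
      funext k; ring
    have h0 := (hφ (α i) θ hθpos).mul_left (Real.exp (-(α i * E)))
    rw [h1] at h0
    have h2 : Real.exp (-(α i * E)) * Real.exp (α i * E) = 1 := by
      rw [← Real.exp_add, neg_add_cancel, Real.exp_zero]
    rw [← hE, h2] at h0
    have h3 := aux_nonneg_of_prob P (X i) (hXmeas i)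
      (fun k => Real.exp (-(α i * E)) * θ^k * φ k (α i) / k.factorial) (hX i) h0
    intro k
    have h4 : (0:ℝ) ≤ Real.exp (-(α i * E)) * θ^k * φ k (α i) / k.factorial := h3 k
    have h5 : (0:ℝ) < Real.exp (-(α i * E)) * θ^k / k.factorial := by positivity
    have h6 : (0:ℝ) ≤ (Real.exp (-(α i * E)) * θ^k / k.factorial) * φ k (α i) := by
      have h7 : Real.exp (-(α i * E)) * θ ^ k * φ k (α i) / (k.factorial:ℝ)
          = (Real.exp (-(α i * E)) * θ^k / k.factorial) * φ k (α i) := by ring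
      rw [h7] at h4
      exact h4
    exact nonneg_of_mul_nonneg_right h6 h5
  -- main induction over finsets
  have key : ∀ s : Finset (Fin n), (∀ k, 0 ≤ φ k (∑ i ∈ s, α i)) ∧
      ∀ k, P {ω | (∑ i ∈ s, X i ω) = k} =
        ENNReal.ofReal (Real.exp (-((∑ i ∈ s, α i) * E)) * θ ^ k *
          φ k (∑ i ∈ s, α i) / (k.factorial : ℝ)) := by
    intro s
    induction s using Finset.induction_on with
    | empty =>
      constructor
      · intro k
        rw [Finset.sum_empty, aux_phi_zero hl0 hφ]
        split <;> norm_num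
      · intro k
        simp only [Finset.sum_empty]
        rw [aux_phi_zero hl0 hφ]
        rcases Nat.eq_zero_or_pos k with hk|hk
        · subst hk
          have hsetu : {ω : Ω | (0:ℕ) = 0} = Set.univ := by
            ext ω; simp
          rw [hsetu, measure_univ]
          norm_num
        · have hsete : {ω : Ω | (0:ℕ) = k} = ∅ := by
            ext ω; simp; omega
          rw [hsete, measure_empty, if_neg hk.ne']
          norm_num
    | @insert i s his ih =>
      obtain ⟨ihnn, ihP⟩ := ih
      have hbnn := hnn i
      constructor
      · intro k
        rw [Finset.sum_insert his, aux_phi_add hl0 hφ (α i) (∑ j ∈ s, α j) k]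
        refine Finset.sum_nonneg (fun j hj => ?_)
        exact mul_nonneg (mul_nonneg (Nat.cast_nonneg _) (hbnn j)) (ihnn (k-j))
      · intro k
        have hset : {ω | (∑ j ∈ insert i s, X j ω) = k}
            = {ω | X i ω + (∑ j ∈ s, X j ω) = k} := by
          ext ω
          simp only [Set.mem_setOf_eq, Finset.sum_insert his]
        rw [hset]
        have hmeasB : Measurable (fun ω => ∑ j ∈ s, X j ω) :=
          Finset.measurable_sum s (fun j _ => hXmeas j)
        have hindep2 : IndepFun (X i) (fun ω => ∑ j ∈ s, X j ω) P := by
          have h := (hindep.indepFun_finsetSum_of_notMem hXmeas his).symm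
          have hfn : (∑ j ∈ s, X j) = fun ω => ∑ j ∈ s, X j ω := by
            funext ω; simp [Finset.sum_apply]
          rwa [hfn] at h
        rw [aux_conv2 P (X i) _ (hXmeas i) hmeasB hindep2 k]
        have hterm : ∀ j ∈ Finset.range (k+1),
            P {ω | X i ω = j} * P {ω | (∑ t ∈ s, X t ω) = k - j}
            = ENNReal.ofReal ((Real.exp (-(α i * E)) * θ^j * φ j (α i) / j.factorial)
              * (Real.exp (-((∑ t ∈ s, α t) * E)) * θ^(k-j) * φ (k-j) (∑ t ∈ s, α t)
                  / (k-j).factorial)) := by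
          intro j hj
          rw [hX i j, ihP (k-j), ← ENNReal.ofReal_mul]
          have h5 : (0:ℝ) ≤ Real.exp (-(α i * E)) * θ^j / j.factorial := by positivity
          have := hbnn j
          calc (0:ℝ) ≤ (Real.exp (-(α i * E)) * θ^j / j.factorial) * φ j (α i) :=
                mul_nonneg h5 this
            _ = Real.exp (-(α i * E)) * θ^j * φ j (α i) / j.factorial := by ring
        rw [Finset.sum_congr rfl hterm, ← ENNReal.ofReal_sum_of_nonneg]
        · congr 1
          have hconv := aux_real_conv φ E (∑ t ∈ s, α t) (α i) θ k
            (aux_phi_add hl0 hφ (α i) (∑ t ∈ s, α t) k)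
          rw [hconv, Finset.sum_insert his]
        · intro j hj
          have h5 : (0:ℝ) ≤ Real.exp (-(α i * E)) * θ^j / j.factorial := by positivity
          have h6 : (0:ℝ) ≤ Real.exp (-((∑ t ∈ s, α t) * E)) * θ^(k-j) / (k-j).factorial := by
            positivity
          have := mul_nonneg (mul_nonneg h5 (hbnn j)) (mul_nonneg h6 (ihnn (k-j)))
          calc (0:ℝ) ≤ (Real.exp (-(α i * E)) * θ^j / j.factorial * φ j (α i))
                * (Real.exp (-((∑ t ∈ s, α t) * E)) * θ^(k-j) / (k-j).factorial
                    * φ (k-j) (∑ t ∈ s, α t)) :=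
              mul_nonneg (mul_nonneg h5 (hbnn j)) (mul_nonneg h6 (ihnn (k-j)))
            _ = Real.exp (-(α i * E)) * θ^j * φ j (α i) / j.factorial
                * (Real.exp (-((∑ t ∈ s, α t) * E)) * θ^(k-j) * φ (k-j) (∑ t ∈ s, α t)
                    / (k-j).factorial) := by ring
  intro k
  exact (key Finset.univ).2 k
end

section
/- If X ∼ DB_λ(α,θ), then its moment generating function is F_X(t) = E[e^{tX}] = exp(α(e_λ(e^t θ) − e_λ(θ))). -/
open Real MeasureTheory ProbabilityTheory Filter Asymptotics

theorem degenerate_bell_mgf (l α θ : ℝ) (hl : l ∈ Set.Ioc (0 : ℝ) 1) (hα : 0 < α) (hθ : 0 < θ)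
    (φ : ℕ → ℝ → ℝ)
    (hφ : ∀ x t : ℝ, 0 < 1 + l * t →
      HasSum (fun n : ℕ => φ n x * t ^ n / (n.factorial : ℝ))
        (Real.exp (x * (degExp l 1 t - 1))))
    {Ω : Type*} [MeasurableSpace Ω] (P : Measure Ω) [IsProbabilityMeasure P]
    (X : Ω → ℕ) (hXmeas : Measurable X)
    (hX : ∀ k : ℕ, P {ω | X ω = k} =
      ENNReal.ofReal (Real.exp (-(α * (degExp l 1 θ - 1))) * θ ^ k * φ k α / (k.factorial : ℝ))) :
    ∀ t : ℝ, ∫ ω, Real.exp (t * (X ω : ℝ)) ∂P =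
      Real.exp (α * (degExp l 1 (Real.exp t * θ) - degExp l 1 θ)) := by
  obtain ⟨hl0, hl1⟩ := hl
  intro t
  set c : ℝ := Real.exp (-(α * (degExp l 1 θ - 1))) with hc
  set p : ℕ → ℝ := fun k => c * θ ^ k * φ k α / (k.factorial : ℝ) with hp
  have hθ' : (0:ℝ) < 1 + l * θ := by positivity
  have hs1 := hφ α θ hθ'
  have hsp : HasSum p 1 := by
    have h := hs1.mul_left c
    have he : c * Real.exp (α * (degExp l 1 θ - 1)) = 1 := by
      rw [hc, ← Real.exp_add]; simp
    rw [he] at h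
    convert h using 2 with n
    · rfl
    simp only [hp]; ring
  -- total mass
  have htotal : ∑' k : ℕ, P {ω | X ω = k} = 1 := by
    have hd : Pairwise (Function.onFun Disjoint fun k : ℕ => {ω | X ω = k}) := by
      intro i j hij
      simp only [Function.onFun, Set.disjoint_left]
      rintro ω (hi : X ω = i) (hj : X ω = j)
      exact hij (hi ▸ hj ▸ rfl)
    have hm : ∀ k : ℕ, MeasurableSet {ω | X ω = k} := fun k =>
      hXmeas (measurableSet_singleton k)
    rw [← measure_iUnion hd hm]
    have : (⋃ k : ℕ, {ω | X ω = k}) = Set.univ := by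
      ext ω; simp
    rw [this, measure_univ]
  have hXp : ∀ k : ℕ, P {ω | X ω = k} = ENNReal.ofReal (p k) := fun k => hX k
  -- nonnegativity of p
  have hpos : ∀ k, 0 ≤ p k := by
    by_contra h
    push_neg at h
    obtain ⟨j, hj⟩ := h
    set q : ℕ → ℝ := fun k => max (p k) 0 with hq
    have hq0 : ∀ k, 0 ≤ q k := fun k => le_max_right _ _
    have hqs : Summable q := by
      apply Summable.of_nonneg_of_le hq0 (fun k => ?_) hsp.summable.abs
      exact max_le (le_abs_self _) (abs_nonneg _)
    have hofReal : ∀ k, ENNReal.ofReal (p k) = ENNReal.ofReal (q k) := by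
      intro k
      rcases le_or_gt 0 (p k) with h1 | h1
      · rw [hq]; simp [max_eq_left h1]
      · rw [hq]; simp [max_eq_right h1.le, ENNReal.ofReal_eq_zero.2 h1.le]
    have h1 : ENNReal.ofReal (∑' k, q k) = 1 := by
      rw [ENNReal.ofReal_tsum_of_nonneg hq0 hqs]
      rw [← htotal]
      exact (tsum_congr fun k => ((hXp k).trans (hofReal k))).symm
    have hq1 : ∑' k, q k = 1 := by
      have := ENNReal.ofReal_eq_one.mp h1
      linarith [this]
    have hr : Summable (fun k => q k - p k) := hqs.sub hsp.summable
    have hr0 : ∀ k, 0 ≤ q k - p k := fun k =>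
      sub_nonneg.2 (le_max_left _ _)
    have hrsum : ∑' k, (q k - p k) = 0 := by
      rw [Summable.tsum_sub hqs hsp.summable, hq1, hsp.tsum_eq]; ring
    have : 0 < ∑' k, (q k - p k) := by
      apply Summable.tsum_pos hr hr0 j
      simp [hq, max_eq_right hj.le]
      linarith
    linarith
  -- map measure
  have hmap : ∀ k : ℕ, (P.map X) {k} = ENNReal.ofReal (p k) := by
    intro k
    rw [Measure.map_apply hXmeas (measurableSet_singleton k)]
    have : X ⁻¹' {k} = {ω | X ω = k} := by ext ω; simp
    rw [this, hXp]
  -- the weighted sum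
  have ht' : (0:ℝ) < 1 + l * (Real.exp t * θ) := by positivity
  have hs2 := hφ α (Real.exp t * θ) ht'
  have hsg : HasSum (fun n : ℕ => Real.exp (t * n) * p n)
      (Real.exp (α * (degExp l 1 (Real.exp t * θ) - degExp l 1 θ))) := by
    have h := hs2.mul_left c
    have he : c * Real.exp (α * (degExp l 1 (Real.exp t * θ) - 1)) =
        Real.exp (α * (degExp l 1 (Real.exp t * θ) - degExp l 1 θ)) := by
      rw [hc, ← Real.exp_add]; congr 1; ring
    rw [he] at h
    convert h using 2 with n
    · rfl
    have hexp : Real.exp (t * n) = Real.exp t ^ n := by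
      rw [← Real.exp_nat_mul]; ring_nf
    simp only [hp, hexp, mul_pow]; ring
  have hg0 : ∀ n : ℕ, 0 ≤ Real.exp (t * n) * p n := fun n =>
    mul_nonneg (Real.exp_nonneg _) (hpos n)
  -- integrability
  have haesm : AEStronglyMeasurable (fun n : ℕ => Real.exp (t * n)) (P.map X) :=
    (measurable_from_nat (f := fun n : ℕ => Real.exp (t * n))).aestronglyMeasurable
  have hintg : Integrable (fun n : ℕ => Real.exp (t * n)) (P.map X) := by
    refine ⟨haesm, ?_⟩
    rw [HasFiniteIntegral, lintegral_countable']
    have : ∀ n : ℕ, ‖Real.exp (t * n)‖ₑ * (P.map X) {n}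
        = ENNReal.ofReal (Real.exp (t * n) * p n) := by
      intro n
      rw [hmap, Real.enorm_eq_ofReal (Real.exp_nonneg _),
        ← ENNReal.ofReal_mul (Real.exp_nonneg _)]
    rw [tsum_congr this, ← ENNReal.ofReal_tsum_of_nonneg hg0 hsg.summable]
    exact ENNReal.ofReal_lt_top
  -- compute the integral
  rw [← integral_map hXmeas.aemeasurable haesm, integral_countable' hintg]
  rw [← hsg.tsum_eq]
  apply tsum_congr
  intro n
  rw [measureReal_def, hmap, smul_eq_mul, ENNReal.toReal_ofReal (hpos n), mul_comm]
end

section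
/- If X ∼ DB_λ(α,θ), then E[X] = θα e_λ^{1−λ}(θ), where e_λ^{x}(θ) = (1+λθ)^{x/λ}. -/
open Real MeasureTheory ProbabilityTheory Filter Asymptotics

/-- Termwise differentiation of the generating function at `θ`. -/
lemma aux_deriv_sum (l α θ : ℝ) (hl : 0 < l) (hθ : 0 < θ) (a : ℕ → ℝ)
    (h : ∀ t : ℝ, 0 < 1 + l * t →
      HasSum (fun n : ℕ => a n * t ^ n) (Real.exp (α * (degExp l 1 t - 1)))) :
    HasSum (fun n : ℕ => a n * (n * θ ^ (n - 1)))
      (α * (1 + l * θ) ^ (1 / l - 1) * Real.exp (α * (degExp l 1 θ - 1))) := by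
  set R : ℝ := θ + 1 with hR
  have hRpos : 0 < R := by positivity
  have hT : (0:ℝ) < 1 + l * (2 * R) := by positivity
  -- summability at 2R gives a bound on |a n| (2R)^n
  have hsum2R := (h (2 * R) hT).summable
  obtain ⟨C, hC⟩ : ∃ C, ∀ n, |a n * (2 * R) ^ n| ≤ C := by
    have habs : Filter.Tendsto (fun n => |a n * (2 * R) ^ n|) Filter.atTop (nhds 0) := by
      simpa using hsum2R.tendsto_atTop_zero.abs
    obtain ⟨C, hC⟩ := habs.bddAbove_range
    exact ⟨C, fun n => hC ⟨n, rfl⟩⟩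
  have hCnn : 0 ≤ C := le_trans (abs_nonneg _) (hC 0)
  set u : ℕ → ℝ := fun n => C / R * (n * (1 / 2 : ℝ) ^ n) with hu
  have hu_sum : Summable u := by
    apply Summable.mul_left
    have := summable_pow_mul_geometric_of_norm_lt_one (R := ℝ) 1 (r := (1/2 : ℝ)) (by norm_num)
    simpa [pow_one] using this
  set g : ℕ → ℝ → ℝ := fun n y => a n * y ^ n with hg
  set g' : ℕ → ℝ → ℝ := fun n y => a n * (n * y ^ (n - 1)) with hg'
  have hgderiv : ∀ n y, y ∈ Set.Ioo (0:ℝ) R → HasDerivAt (g n) (g' n y) y := by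
    intro n y _
    exact (hasDerivAt_pow n y).const_mul (a n)
  have hbound : ∀ n y, y ∈ Set.Ioo (0:ℝ) R → ‖g' n y‖ ≤ u n := by
    intro n y hy
    have hy0 : 0 ≤ y := le_of_lt hy.1
    have hyR : y ≤ R := le_of_lt hy.2
    have h1 : ‖g' n y‖ = |a n| * (n * |y| ^ (n - 1)) := by
      simp [hg', abs_mul, abs_pow, Nat.abs_cast]
    rw [h1, abs_of_nonneg hy0]
    have h2 : y ^ (n - 1) ≤ R ^ (n - 1) := pow_le_pow_left₀ hy0 hyR _
    have h3 : |a n| * (n * y ^ (n - 1)) ≤ |a n| * (n * R ^ (n - 1)) := by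
      apply mul_le_mul_of_nonneg_left _ (abs_nonneg _)
      exact mul_le_mul_of_nonneg_left h2 (Nat.cast_nonneg n)
    refine h3.trans ?_
    -- |a n| * n * R^(n-1) ≤ C/R * (n * (1/2)^n)
    have h4 : |a n| ≤ C / (2 * R) ^ n := by
      rw [le_div_iff₀ (by positivity)]
      simpa [abs_mul, abs_of_nonneg (by positivity : (0:ℝ) ≤ (2*R)^n)] using hC n
    have h5 : |a n| * (n * R ^ (n - 1)) ≤ C / (2 * R) ^ n * (n * R ^ (n - 1)) :=
      mul_le_mul_of_nonneg_right h4 (by positivity)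
    refine h5.trans (le_of_eq ?_)
    rcases n with _ | m
    · simp [hu]
    · have hRne : R ≠ 0 := ne_of_gt hRpos
      rw [hu, Nat.add_sub_cancel, mul_pow]
      have h2ne : ((2:ℝ)) ^ (m+1) ≠ 0 := by positivity
      have hRne' : R ^ (m+1) ≠ 0 := by positivity
      field_simp
      rw [pow_succ R m]
      have h12 : ((1:ℝ)/2)^m * 2^m = 1 := by rw [← mul_pow]; norm_num
      linear_combination (-(C*R*R^m)) * h12
  have hθmem : θ ∈ Set.Ioo (0:ℝ) R := ⟨hθ, by simp [hR]⟩
  have hsum0 : Summable fun n => g n θ := by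
    have : (0:ℝ) < 1 + l * θ := by positivity
    exact (h θ this).summable
  have key : HasDerivAt (fun z => ∑' n, g n z) (∑' n, g' n θ) θ :=
    hasDerivAt_tsum_of_isPreconnected hu_sum isOpen_Ioo (isPreconnected_Ioo)
      hgderiv hbound hθmem hsum0 hθmem
  -- the tsum equals the exponential function on Ioo 0 R
  have heq : (fun z => ∑' n, g n z) =ᶠ[nhds θ] fun t => Real.exp (α * (degExp l 1 t - 1)) := by
    filter_upwards [isOpen_Ioo.mem_nhds hθmem] with z hz
    have hz' : (0:ℝ) < 1 + l * z := by nlinarith [hz.1]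
    exact (h z hz').tsum_eq
  have key2 : HasDerivAt (fun t => Real.exp (α * (degExp l 1 t - 1))) (∑' n, g' n θ) θ :=
    key.congr_of_eventuallyEq heq.symm
  -- explicit derivative of the exponential function
  have hpos : (0:ℝ) < 1 + l * θ := by positivity
  have h1 : HasDerivAt (fun t : ℝ => 1 + l * t) l θ := by
    simpa using ((hasDerivAt_id θ).const_mul l).const_add 1
  have h2 : HasDerivAt (fun t : ℝ => (1 + l * t) ^ (1 / l : ℝ))
      ((1 / l) * (1 + l * θ) ^ (1 / l - 1) * l) θ := by
    exact (Real.hasDerivAt_rpow_const (p := 1 / l) (Or.inl (ne_of_gt hpos))).comp θ h1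
  have h2' : HasDerivAt (fun t : ℝ => degExp l 1 t) ((1 + l * θ) ^ (1 / l - 1)) θ := by
    have : (1 / l) * (1 + l * θ) ^ (1 / l - 1) * l = (1 + l * θ) ^ (1 / l - 1) := by
      field_simp
    rw [← this]
    exact h2.congr_of_eventuallyEq (by filter_upwards with t; simp [degExp])
  have h3 : HasDerivAt (fun t => Real.exp (α * (degExp l 1 t - 1)))
      (Real.exp (α * (degExp l 1 θ - 1)) * (α * (1 + l * θ) ^ (1 / l - 1))) θ :=
    (((h2'.sub_const 1).const_mul α)).exp
  have hDeq : ∑' n, g' n θ =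
      α * (1 + l * θ) ^ (1 / l - 1) * Real.exp (α * (degExp l 1 θ - 1)) := by
    have := key2.unique h3
    rw [this]; ring
  have hsummable : Summable fun n => g' n θ :=
    Summable.of_norm_bounded hu_sum (fun n => hbound n θ hθmem)
  have := hsummable.hasSum
  rw [hDeq] at this
  exact this

theorem degenerate_bell_expectation (l α θ : ℝ) (hl : l ∈ Set.Ioc (0 : ℝ) 1) (hα : 0 < α) (hθ : 0 < θ)
    (φ : ℕ → ℝ → ℝ)
    (hφ : ∀ x t : ℝ, 0 < 1 + l * t →
      HasSum (fun n : ℕ => φ n x * t ^ n / (n.factorial : ℝ))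
        (Real.exp (x * (degExp l 1 t - 1))))
    {Ω : Type*} [MeasurableSpace Ω] (P : Measure Ω) [IsProbabilityMeasure P]
    (X : Ω → ℕ) (hXmeas : Measurable X)
    (hX : ∀ k : ℕ, P {ω | X ω = k} =
      ENNReal.ofReal (Real.exp (-(α * (degExp l 1 θ - 1))) * θ ^ k * φ k α / (k.factorial : ℝ))) :
    ∫ ω, (X ω : ℝ) ∂P = θ * α * degExp l (1 - l) θ := by
  obtain ⟨hl0, hl1⟩ := hl
  set A : ℝ := α * (degExp l 1 θ - 1) with hA
  set a : ℕ → ℝ := fun n => φ n α / n.factorial with ha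
  set c : ℕ → ℝ := fun k => Real.exp (-A) * θ ^ k * φ k α / (k.factorial : ℝ) with hc
  have hck : ∀ k, c k = Real.exp (-A) * (a k * θ ^ k) := by
    intro k; rw [hc, ha]; ring
  have hpos : (0:ℝ) < 1 + l * θ := by positivity
  -- the generating series as a power series in `a`
  have hgen : ∀ t : ℝ, 0 < 1 + l * t →
      HasSum (fun n : ℕ => a n * t ^ n) (Real.exp (α * (degExp l 1 t - 1))) := by
    intro t ht
    have := hφ α t ht
    refine this.congr_fun fun n => ?_
    rw [ha]; ring
  -- c sums to 1
  have hc1 : HasSum c 1 := by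
    have := (hgen θ hpos).mul_left (Real.exp (-A))
    rw [← Real.exp_add, neg_add_cancel, Real.exp_zero] at this
    refine this.congr_fun fun n => (hck n).symm ▸ rfl
  -- partition of Ω
  have hpart : ∑' k : ℕ, P {ω | X ω = k} = 1 := by
    have hdisj : Pairwise (Function.onFun Disjoint fun k : ℕ => {ω | X ω = k}) := by
      intro i j hij
      simp only [Function.onFun, Set.disjoint_left]
      rintro ω hi hj
      exact hij (hi.symm.trans hj)
    have hmeas : ∀ k : ℕ, MeasurableSet {ω | X ω = k} := fun k =>
      hXmeas (measurableSet_singleton k)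
    rw [← measure_iUnion hdisj hmeas]
    have : ⋃ k : ℕ, {ω | X ω = k} = Set.univ := by
      ext ω; simp
    rw [this, measure_univ]
  -- nonnegativity of c
  have hcnn : ∀ k, 0 ≤ c k := by
    by_contra hcontra
    push_neg at hcontra
    obtain ⟨j, hj⟩ := hcontra
    have hmax : HasSum (fun k => max (c k) 0) 1 := by
      have h1 : ∀ k, P {ω | X ω = k} = ENNReal.ofReal (c k) := fun k => hX k
      have h2 : ∑' k : ℕ, ENNReal.ofReal (c k) = 1 := by
        rw [← hpart]; exact tsum_congr fun k => (h1 k).symm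
      have h3 : ∀ k : ℕ, (ENNReal.ofReal (c k)).toReal = max (c k) 0 := by
        intro k
        rcases le_or_gt 0 (c k) with h | h
        · rw [ENNReal.toReal_ofReal h, max_eq_left h]
        · rw [ENNReal.ofReal_of_nonpos h.le, max_eq_right h.le]; simp
      have h4 : ∑' k : ℕ, (ENNReal.ofReal (c k)).toReal = 1 := by
        rw [← ENNReal.tsum_toReal_eq (fun k => ENNReal.ofReal_ne_top), h2]
        simp
      have h5 : Summable fun k : ℕ => (ENNReal.ofReal (c k)).toReal := by
        apply ENNReal.summable_toReal
        rw [h2]; exact ENNReal.one_ne_top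
      have := (h5.hasSum_iff).2 h4
      refine this.congr_fun fun k => h3 k
    have hlt : (1:ℝ) < 1 := by
      refine hasSum_lt (f := c) (g := fun k => max (c k) 0) (i := j)
        (fun k => le_max_left _ _) ?_ hc1 hmax
      simpa [max_eq_right hj.le] using hj
    exact absurd hlt (lt_irrefl 1)
  have htoReal : ∀ k, (P {ω | X ω = k}).toReal = c k := by
    intro k
    rw [hX k]
    exact ENNReal.toReal_ofReal (hcnn k)
  -- the derivative series
  have hderiv := aux_deriv_sum l α θ hl0 hθ a hgen
  -- HasSum for k * c k
  have hkc : HasSum (fun k : ℕ => (k : ℝ) * c k) (θ * α * degExp l (1 - l) θ) := by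
    have h1 := hderiv.mul_left (Real.exp (-A) * θ)
    have h2 : ∀ k : ℕ, (k : ℝ) * c k = Real.exp (-A) * θ * (a k * (k * θ ^ (k - 1))) := by
      intro k
      rw [hck k]
      rcases k with _ | m
      · simp
      · have hpow : θ ^ (m + 1) = θ * θ ^ (m + 1 - 1) := by
          rw [Nat.add_sub_cancel, pow_succ]; ring
        rw [hpow]; push_cast; ring
    have h3 : Real.exp (-A) * θ * (α * (1 + l * θ) ^ (1 / l - 1) * Real.exp A) =
        θ * α * degExp l (1 - l) θ := by
      have he : Real.exp (-A) * Real.exp A = 1 := by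
        rw [← Real.exp_add, neg_add_cancel, Real.exp_zero]
      have hexp : (1 / l - 1 : ℝ) = (1 - l) / l := by field_simp
      rw [degExp, ← hexp]
      calc Real.exp (-A) * θ * (α * (1 + l * θ) ^ (1 / l - 1) * Real.exp A)
          = (Real.exp (-A) * Real.exp A) * (θ * α * (1 + l * θ) ^ (1 / l - 1)) := by ring
        _ = θ * α * (1 + l * θ) ^ (1 / l - 1) := by rw [he]; ring
    rw [← h3]
    exact h1.congr_fun h2
  have hkc_nonneg : ∀ k : ℕ, 0 ≤ (k : ℝ) * c k := fun k =>
    mul_nonneg (Nat.cast_nonneg k) (hcnn k)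
  -- map the measure to ℕ
  set μ : Measure ℕ := P.map X with hμ
  have hμsing : ∀ k : ℕ, μ {k} = ENNReal.ofReal (c k) := by
    intro k
    rw [hμ, Measure.map_apply hXmeas (measurableSet_singleton k)]
    have : X ⁻¹' {k} = {ω | X ω = k} := rfl
    rw [this, hX k]
  have hint : Integrable (fun n : ℕ => (n : ℝ)) μ := by
    refine ⟨(measurable_from_top (f := fun n : ℕ => (n:ℝ))).aestronglyMeasurable, ?_⟩
    rw [HasFiniteIntegral, lintegral_countable']
    have : ∀ n : ℕ, ‖(n : ℝ)‖ₑ * μ {n} = ENNReal.ofReal ((n : ℝ) * c n) := by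
      intro n
      rw [hμsing n, Real.enorm_eq_ofReal (Nat.cast_nonneg n),
        ← ENNReal.ofReal_mul (Nat.cast_nonneg n)]
    rw [tsum_congr this, ← ENNReal.ofReal_tsum_of_nonneg hkc_nonneg hkc.summable]
    exact ENNReal.ofReal_lt_top
  have hintX : ∫ ω, (X ω : ℝ) ∂P = ∫ n, (n : ℝ) ∂μ := by
    rw [hμ, integral_map hXmeas.aemeasurable]
    exact (measurable_from_top (f := fun n : ℕ => (n:ℝ))).aestronglyMeasurable
  rw [hintX, integral_countable' hint]
  have : ∀ n : ℕ, μ.real {n} • (n : ℝ) = (n : ℝ) * c n := by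
    intro n
    rw [Measure.real, hμsing n, ENNReal.toReal_ofReal (hcnn n), smul_eq_mul]
    ring
  rw [tsum_congr this]
  exact hkc.tsum_eq
end

section
/- If X ∼ DB_λ(α,θ), then E[X²] = θα(1 + θ(1−λ)e_λ^{−λ}(θ)) e_λ^{1−λ}(θ) + θ²α² e_λ^{2(1−λ)}(θ), where e_λ^x(θ) = (1+λθ)^{x/λ}. -/
open Real MeasureTheory ProbabilityTheory Filter Asymptotics

/-- Master summability lemma: if `∑ a n * T^n` converges and `0 ≤ r < T`, then
`∑ n^k * |a n| * r^n` converges. -/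
lemma dbsm_aux_summable {a : ℕ → ℝ} {T : ℝ} (hT : 0 < T) (h : Summable (fun n : ℕ => a n * T ^ n))
    (k : ℕ) {r : ℝ} (hr : 0 ≤ r) (hrT : r < T) :
    Summable (fun n : ℕ => (n : ℝ) ^ k * |a n| * r ^ n) := by
  have htend : Filter.Tendsto (fun n : ℕ => |a n * T ^ n|) atTop (nhds 0) := by
    simpa using (h.tendsto_atTop_zero).abs
  obtain ⟨C, hC⟩ := htend.bddAbove_range
  have hC' : ∀ n, |a n| * T ^ n ≤ C := by
    intro n
    have := hC (Set.mem_range_self n)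
    rwa [abs_mul, abs_pow, abs_of_pos hT] at this
  have hq : 0 ≤ r / T := div_nonneg hr hT.le
  have hq1 : r / T < 1 := (div_lt_one hT).2 hrT
  have hsum : Summable (fun n : ℕ => C * ((n : ℝ) ^ k * (r / T) ^ n)) := by
    exact (summable_pow_mul_geometric_of_norm_lt_one k (by rwa [Real.norm_eq_abs, abs_of_nonneg hq])).mul_left C
  refine Summable.of_nonneg_of_le (fun n : ℕ => ?_) (fun n : ℕ => ?_) hsum
  · positivity
  · have hrn : r ^ n = T ^ n * (r / T) ^ n := by
      rw [← mul_pow, mul_div_cancel₀ _ hT.ne']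
    calc (n : ℝ) ^ k * |a n| * r ^ n = (|a n| * T ^ n) * ((n : ℝ) ^ k * (r / T) ^ n) := by
          rw [hrn]; ring
      _ ≤ C * ((n : ℝ) ^ k * (r / T) ^ n) := by
          apply mul_le_mul_of_nonneg_right (hC' n)
          positivity

/-- Term-by-term first derivative of a power series that is everywhere summable
with polynomial weights. -/
lemma dbsm_aux_deriv {a : ℕ → ℝ}
    (hs : ∀ (k : ℕ) (r : ℝ), 0 ≤ r → Summable (fun n : ℕ => (n : ℝ) ^ k * |a n| * r ^ n)) (y : ℝ) :
    HasDerivAt (fun t => ∑' n : ℕ, a n * t ^ n) (∑' n : ℕ, (n : ℝ) * a n * y ^ (n - 1)) y := by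
  set R : ℝ := |y| + 1 with hR
  have hR0 : 0 ≤ R := by positivity
  have hR1 : 1 ≤ R := by have := abs_nonneg y; linarith
  have hyR : |y| < R := by simp [hR]
  refine hasDerivAt_tsum_of_isPreconnected (𝕜 := ℝ) (F := ℝ)
    (g := fun (n : ℕ) (z : ℝ) => a n * z ^ n)
    (g' := fun (n : ℕ) (z : ℝ) => (n : ℝ) * a n * z ^ (n - 1))
    (u := fun n : ℕ => (n : ℝ) * |a n| * R ^ n)
    (t := Set.Ioo (-R) R) (y₀ := y) ?_ isOpen_Ioo (isPreconnected_Ioo)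
    (fun n z _ => ?_) (fun n z hz => ?_) (abs_lt.1 hyR) ?_ (abs_lt.1 hyR)
  · have := hs 1 R hR0
    refine this.congr (fun n : ℕ => by rw [pow_one])
  · simpa [mul_comm, mul_assoc, mul_left_comm] using (hasDerivAt_pow n z).const_mul (a n)
  · have hzR : |z| ≤ R := by
      rw [abs_le]; exact ⟨(hz.1).le, (hz.2).le⟩
    have h1 : |z| ^ (n - 1) ≤ R ^ n := by
      calc |z| ^ (n - 1) ≤ R ^ (n - 1) := pow_le_pow_left₀ (abs_nonneg z) hzR _
        _ ≤ R ^ n := pow_le_pow_right₀ hR1 (Nat.sub_le n 1)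
    rw [Real.norm_eq_abs, abs_mul, abs_mul, abs_pow, Nat.abs_cast]
    exact mul_le_mul_of_nonneg_left h1 (by positivity)
  · have h0 := hs 0 |y| (abs_nonneg y)
    refine Summable.of_norm (h0.congr (fun n : ℕ => ?_))
    rw [Real.norm_eq_abs, abs_mul, abs_pow, pow_zero, one_mul]

/-- Term-by-term derivative of the derivative series. -/
lemma dbsm_aux_deriv2 {a : ℕ → ℝ}
    (hs : ∀ (k : ℕ) (r : ℝ), 0 ≤ r → Summable (fun n : ℕ => (n : ℝ) ^ k * |a n| * r ^ n)) (y : ℝ) :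
    HasDerivAt (fun t => ∑' n : ℕ, (n : ℝ) * a n * t ^ (n - 1))
      (∑' n : ℕ, (n : ℝ) * ((n - 1 : ℕ) : ℝ) * a n * y ^ (n - 2)) y := by
  set R : ℝ := |y| + 1 with hR
  have hR0 : 0 ≤ R := by positivity
  have hR1 : 1 ≤ R := by have := abs_nonneg y; linarith
  have hyR : |y| < R := by simp [hR]
  refine hasDerivAt_tsum_of_isPreconnected (𝕜 := ℝ) (F := ℝ)
    (g := fun (n : ℕ) (z : ℝ) => (n : ℝ) * a n * z ^ (n - 1))
    (g' := fun (n : ℕ) (z : ℝ) => (n : ℝ) * ((n - 1 : ℕ) : ℝ) * a n * z ^ (n - 2))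
    (u := fun n : ℕ => (n : ℝ) ^ 2 * |a n| * R ^ n)
    (t := Set.Ioo (-R) R) (y₀ := y) (hs 2 R hR0) isOpen_Ioo (isPreconnected_Ioo)
    (fun n z _ => ?_) (fun n z hz => ?_) (abs_lt.1 hyR) ?_ (abs_lt.1 hyR)
  · have h := (hasDerivAt_pow (n - 1) z).const_mul ((n : ℝ) * a n)
    have he : n - 1 - 1 = n - 2 := by omega
    rw [he] at h
    exact h.congr_deriv (by ring)
  · have hzR : |z| ≤ R := by rw [abs_le]; exact ⟨(hz.1).le, (hz.2).le⟩
    have h1 : |z| ^ (n - 2) ≤ R ^ n := by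
      calc |z| ^ (n - 2) ≤ R ^ (n - 2) := pow_le_pow_left₀ (abs_nonneg z) hzR _
        _ ≤ R ^ n := pow_le_pow_right₀ hR1 (Nat.sub_le n 2)
    rw [Real.norm_eq_abs, abs_mul, abs_mul, abs_mul, abs_pow, Nat.abs_cast, Nat.abs_cast]
    calc (n : ℝ) * ((n - 1 : ℕ) : ℝ) * |a n| * |z| ^ (n - 2)
        ≤ (n : ℝ) * (n : ℝ) * |a n| * (R ^ n) := by
          apply mul_le_mul (by
            apply mul_le_mul_of_nonneg_right _ (abs_nonneg _)
            have : ((n - 1 : ℕ) : ℝ) ≤ (n : ℝ) := by exact_mod_cast Nat.sub_le n 1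
            exact mul_le_mul_of_nonneg_left this (Nat.cast_nonneg n)) h1 (by positivity) (by positivity)
      _ = (n : ℝ) ^ 2 * |a n| * R ^ n := by ring
  · have h1 := hs 1 |y| (abs_nonneg y)
    refine Summable.of_norm (Summable.of_nonneg_of_le (fun n => norm_nonneg _) (fun n => ?_)
      ((hs 1 R hR0).congr (fun n : ℕ => by rw [pow_one])))
    rw [Real.norm_eq_abs, abs_mul, abs_mul, abs_pow, Nat.abs_cast]
    have h2 : |y| ^ (n - 1) ≤ R ^ n :=
      (pow_le_pow_left₀ (abs_nonneg y) hyR.le _).trans (pow_le_pow_right₀ hR1 (Nat.sub_le n 1))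
    exact mul_le_mul_of_nonneg_left h2 (by positivity)

theorem degenerate_bell_second_moment (l α θ : ℝ) (hl : l ∈ Set.Ioc (0 : ℝ) 1) (hα : 0 < α) (hθ : 0 < θ)
    (φ : ℕ → ℝ → ℝ)
    (hφ : ∀ x t : ℝ, 0 < 1 + l * t →
      HasSum (fun n : ℕ => φ n x * t ^ n / (n.factorial : ℝ))
        (Real.exp (x * (degExp l 1 t - 1))))
    {Ω : Type*} [MeasurableSpace Ω] (P : Measure Ω) [IsProbabilityMeasure P]
    (X : Ω → ℕ) (hXmeas : Measurable X)
    (hX : ∀ k : ℕ, P {ω | X ω = k} =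
      ENNReal.ofReal (Real.exp (-(α * (degExp l 1 θ - 1))) * θ ^ k * φ k α / (k.factorial : ℝ))) :
    ∫ ω, ((X ω : ℝ)) ^ 2 ∂P =
      θ * α * (1 + θ * (1 - l) * degExp l (-l) θ) * degExp l (1 - l) θ
        + θ ^ 2 * α ^ 2 * degExp l (2 * (1 - l)) θ := by
  obtain ⟨hl0, hl1⟩ := hl
  have hb : 0 < 1 + l * θ := by positivity
  set a : ℕ → ℝ := fun n => φ n α / n.factorial with ha
  -- master summability
  have hs : ∀ (k : ℕ) (r : ℝ), 0 ≤ r → Summable (fun n : ℕ => (n : ℝ) ^ k * |a n| * r ^ n) := by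
    intro k r hr
    have hT : (0:ℝ) < 1 + l * (r + 1) := by positivity
    have h := (hφ α (r + 1) hT).summable
    have h' : Summable (fun n : ℕ => a n * (r + 1) ^ n) :=
      h.congr (fun n => by simp only [ha]; ring)
    exact dbsm_aux_summable (by positivity) h' k hr (by linarith)
  set F : ℝ → ℝ := fun t => Real.exp (α * (degExp l 1 t - 1)) with hF
  set G : ℝ → ℝ := fun t => α * ((1 + l * t) ^ (1/l - 1) * F t) with hG
  have hso : IsOpen {t : ℝ | 0 < 1 + l * t} :=
    isOpen_lt continuous_const (continuous_const.add (continuous_const.mul continuous_id))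
  have hfeq : ∀ t ∈ {t : ℝ | 0 < 1 + l * t}, (∑' n : ℕ, a n * t ^ n) = F t := by
    intro t ht
    have h := hφ α t ht
    have he : (fun n : ℕ => φ n α * t ^ n / (n.factorial : ℝ)) = fun n : ℕ => a n * t ^ n := by
      funext n; simp only [ha]; ring
    rw [he] at h
    exact h.tsum_eq
  -- derivative of F
  have hFd : ∀ y : ℝ, 0 < 1 + l * y → HasDerivAt F (G y) y := by
    intro y hy
    have h1 : HasDerivAt (fun t : ℝ => 1 + l * t) l y := by
      simpa using ((hasDerivAt_id y).const_mul l).const_add 1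
    have h2 := (Real.hasDerivAt_rpow_const (x := 1 + l * y) (p := 1/l) (Or.inl hy.ne')).comp y h1
    have h3 := ((h2.sub_const 1).const_mul α).exp
    simp only [Function.comp] at h3
    have hval : G y = Real.exp (α * ((1 + l * y) ^ (1/l) - 1)) *
        (α * (1/l * (1 + l * y) ^ (1/l - 1) * l)) := by
      simp only [hG, hF, degExp]
      have : 1/l * (1 + l * y) ^ (1/l - 1) * l = (1 + l * y) ^ (1/l - 1) := by
        field_simp
      rw [this]; ring_nf
    rw [hval]
    simpa only [hF, degExp] using h3
  -- derivative of G
  have hGd : ∀ y : ℝ, 0 < 1 + l * y → HasDerivAt G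
      (α * (((1/l - 1) * (1 + l * y) ^ (1/l - 1 - 1) * l) * F y
        + (1 + l * y) ^ (1/l - 1) * G y)) y := by
    intro y hy
    have h1 : HasDerivAt (fun t : ℝ => 1 + l * t) l y := by
      simpa using ((hasDerivAt_id y).const_mul l).const_add 1
    have h5 := (Real.hasDerivAt_rpow_const (x := 1 + l * y) (p := 1/l - 1) (Or.inl hy.ne')).comp y h1
    have h6 : HasDerivAt (fun t : ℝ => (1 + l * t) ^ (1/l - 1)) ((1/l - 1) * (1 + l * y) ^ (1/l - 1 - 1) * l) y := by
      exact h5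
    have h7 := (h6.mul (hFd y hy)).const_mul α
    exact h7
  -- first derivative identity on the domain
  have hf1 : ∀ y : ℝ, 0 < 1 + l * y → (∑' n : ℕ, (n : ℝ) * a n * y ^ (n - 1)) = G y := by
    intro y hy
    have hA := dbsm_aux_deriv hs y
    have hmem : {t : ℝ | 0 < 1 + l * t} ∈ nhds y := hso.mem_nhds hy
    have heq : (fun t => ∑' n : ℕ, a n * t ^ n) =ᶠ[nhds y] F :=
      Filter.eventually_of_mem hmem hfeq
    have hA' : HasDerivAt F (∑' n : ℕ, (n : ℝ) * a n * y ^ (n - 1)) y :=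
      (heq.hasDerivAt_iff).1 hA
    exact hA'.unique (hFd y hy)
  -- second derivative identity at θ
  have hf2 : (∑' n : ℕ, (n : ℝ) * ((n - 1 : ℕ) : ℝ) * a n * θ ^ (n - 2)) =
      α * (((1/l - 1) * (1 + l * θ) ^ (1/l - 1 - 1) * l) * F θ
        + (1 + l * θ) ^ (1/l - 1) * G θ) := by
    have hB := dbsm_aux_deriv2 hs θ
    have heq1 : (fun t => ∑' n : ℕ, (n : ℝ) * a n * t ^ (n - 1)) =ᶠ[nhds θ] G :=
      Filter.eventually_of_mem (hso.mem_nhds hb) (fun y hy => hf1 y hy)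
    have hB' : HasDerivAt G (∑' n : ℕ, (n : ℝ) * ((n - 1 : ℕ) : ℝ) * a n * θ ^ (n - 2)) θ :=
      (heq1.hasDerivAt_iff).1 hB
    exact hB'.unique (hGd θ hb)
  -- summability of the weighted series at θ
  have hsum1 : Summable (fun n : ℕ => (n : ℝ) * (a n * θ ^ n)) := by
    refine Summable.of_norm (((hs 1 θ hθ.le)).congr (fun n : ℕ => ?_))
    rw [pow_one, Real.norm_eq_abs, abs_mul, abs_mul, abs_pow, Nat.abs_cast,
      abs_of_pos hθ, mul_assoc]
  have hsum2 : Summable (fun n : ℕ => ((n : ℝ) * ((n - 1 : ℕ) : ℝ)) * (a n * θ ^ n)) := by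
    refine Summable.of_norm_bounded (hs 2 θ hθ.le) (fun n : ℕ => ?_)
    rw [Real.norm_eq_abs, abs_mul, abs_mul, abs_mul, abs_pow, Nat.abs_cast,
      Nat.abs_cast, abs_of_pos hθ, ← mul_assoc]
    rw [mul_assoc ((n:ℝ) * _) _ _]
    have h1 : ((n - 1 : ℕ) : ℝ) ≤ (n : ℝ) := by exact_mod_cast Nat.sub_le n 1
    have : (n : ℝ) * ((n - 1 : ℕ) : ℝ) ≤ (n : ℝ) ^ 2 := by
      rw [sq]; exact mul_le_mul_of_nonneg_left h1 (Nat.cast_nonneg n)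
    calc (n : ℝ) * ((n - 1 : ℕ) : ℝ) * (|a n| * θ ^ n)
        ≤ (n : ℝ) ^ 2 * (|a n| * θ ^ n) := by
          apply mul_le_mul_of_nonneg_right this (by positivity)
      _ = (n : ℝ) ^ 2 * |a n| * θ ^ n := by ring
  -- first moment sum
  have hS1 : (∑' n : ℕ, (n : ℝ) * (a n * θ ^ n)) = θ * G θ := by
    have h1 : (∑' n : ℕ, (n : ℝ) * (a n * θ ^ n)) =
        ∑' n : ℕ, θ * ((n : ℝ) * a n * θ ^ (n - 1)) := by
      refine tsum_congr (fun n => ?_)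
      cases n with
      | zero => simp
      | succ m => rw [Nat.succ_sub_one]; rw [pow_succ]; ring
    rw [h1, tsum_mul_left, hf1 θ hb]
  -- second factorial moment sum
  have hS2 : (∑' n : ℕ, ((n : ℝ) * ((n - 1 : ℕ) : ℝ)) * (a n * θ ^ n)) =
      θ ^ 2 * (α * (((1/l - 1) * (1 + l * θ) ^ (1/l - 1 - 1) * l) * F θ
        + (1 + l * θ) ^ (1/l - 1) * G θ)) := by
    have h1 : (∑' n : ℕ, ((n : ℝ) * ((n - 1 : ℕ) : ℝ)) * (a n * θ ^ n)) =
        ∑' n : ℕ, θ ^ 2 * ((n : ℝ) * ((n - 1 : ℕ) : ℝ) * a n * θ ^ (n - 2)) := by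
      refine tsum_congr (fun n => ?_)
      match n with
      | 0 => simp
      | 1 => simp
      | (m + 2) =>
        have : (m + 2 : ℕ) - 2 = m := by omega
        rw [this]
        have : θ ^ (m + 2) = θ ^ 2 * θ ^ m := by ring
        rw [this]; ring
    rw [h1, tsum_mul_left, hf2]
  -- the full second moment sum
  have hSfull : (∑' n : ℕ, (n : ℝ) ^ 2 * (a n * θ ^ n)) = θ * G θ
      + θ ^ 2 * (α * (((1/l - 1) * (1 + l * θ) ^ (1/l - 1 - 1) * l) * F θ
        + (1 + l * θ) ^ (1/l - 1) * G θ)) := by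
    have hsplit : ∀ n : ℕ, (n : ℝ) ^ 2 * (a n * θ ^ n) =
        (n : ℝ) * (a n * θ ^ n) + ((n : ℝ) * ((n - 1 : ℕ) : ℝ)) * (a n * θ ^ n) := by
      intro n
      cases n with
      | zero => simp
      | succ m =>
        have : ((m + 1 - 1 : ℕ) : ℝ) = ((m + 1 : ℕ) : ℝ) - 1 := by
          push_cast [Nat.add_sub_cancel]; ring
        rw [this]; push_cast; ring
    rw [tsum_congr hsplit, Summable.tsum_add hsum1 hsum2, hS1, hS2]
  -- the pmf values
  set c : ℝ := Real.exp (-(α * (degExp l 1 θ - 1))) with hc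
  have hc0 : 0 < c := Real.exp_pos _
  set x : ℕ → ℝ := fun k => c * θ ^ k * φ k α / (k.factorial : ℝ) with hx0
  have hxa : ∀ k, x k = c * (a k * θ ^ k) := fun k => by simp only [hx0, ha]; ring
  have hcF : c * F θ = 1 := by
    rw [hc, hF, ← Real.exp_add]
    simp
  -- absolute summability of x
  have hxabs : Summable (fun k : ℕ => c * (|a k| * θ ^ k)) := by
    refine Summable.mul_left c (((hs 0 θ hθ.le)).congr (fun n : ℕ => by rw [pow_zero, one_mul]))
  have hxsum : Summable x := by
    refine Summable.of_norm (hxabs.congr (fun n : ℕ => ?_))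
    rw [hxa n, Real.norm_eq_abs, abs_mul, abs_mul, abs_pow, abs_of_pos hc0, abs_of_pos hθ]
  have hxtot : (∑' k, x k) = 1 := by
    have : (∑' k, x k) = c * ∑' k : ℕ, a k * θ ^ k := by
      rw [tsum_congr hxa, tsum_mul_left]
    rw [this, hfeq θ hb, hcF]
  -- the map measure
  have hν : ∀ k : ℕ, (P.map X) {k} = ENNReal.ofReal (x k) := by
    intro k
    rw [Measure.map_apply hXmeas (measurableSet_singleton k)]
    have hpre : X ⁻¹' {k} = {ω | X ω = k} := by ext ω; simp
    rw [hpre, hX k]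
  have hνtot : (∑' k : ℕ, ENNReal.ofReal (x k)) = 1 := by
    have h1 : (∑' k : ℕ, (P.map X) {k}) = 1 := by
      have : IsProbabilityMeasure (P.map X) := Measure.isProbabilityMeasure_map hXmeas.aemeasurable
      rw [← measure_univ (μ := P.map X)]
      rw [← Set.iUnion_of_singleton ℕ]
      exact (measure_iUnion (fun i j hij => by simp [Function.onFun, hij]) (fun i => measurableSet_singleton i)).symm
    rw [← h1]
    exact tsum_congr (fun k => (hν k).symm)
  -- nonnegativity of the pmf values
  have hxnn : ∀ k, 0 ≤ x k := by
    by_contra hcon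
    push_neg at hcon
    obtain ⟨k0, hk0⟩ := hcon
    set y : ℕ → ℝ := fun n => max (x n) 0 with hy
    have hysum : Summable y := by
      refine Summable.of_nonneg_of_le (fun n => le_max_right _ _) (fun n => ?_) hxabs
      rw [hy]
      simp only [max_le_iff]
      constructor
      · calc x n ≤ |x n| := le_abs_self _
          _ = c * (|a n| * θ ^ n) := by
            rw [hxa n, abs_mul, abs_mul, abs_pow, abs_of_pos hc0, abs_of_pos hθ]
      · positivity
    have hofy : (∑' k : ℕ, ENNReal.ofReal (x k)) = ∑' k : ℕ, ENNReal.ofReal (y k) := by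
      refine tsum_congr (fun k => ?_)
      rcases le_or_gt 0 (x k) with h | h
      · rw [hy]; simp [max_eq_left h]
      · rw [ENNReal.ofReal_of_nonpos h.le, hy]
        simp [max_eq_right h.le]
    have hytot : (∑' k, y k) = 1 := by
      have h2 : ENNReal.ofReal (∑' k, y k) = 1 := by
        rw [ENNReal.ofReal_tsum_of_nonneg (fun n => le_max_right _ _) hysum, ← hofy, hνtot]
      have h3 := congrArg ENNReal.toReal h2
      rwa [ENNReal.toReal_ofReal (tsum_nonneg (fun n => le_max_right _ _)), ENNReal.toReal_one] at h3
    have hlt : (∑' k, x k) < ∑' k, y k := by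
      refine Summable.tsum_lt_tsum (fun n => le_max_left _ _) (i := k0) ?_ hxsum hysum
      rw [hy]
      simp only [lt_max_iff]
      right; exact hk0
    rw [hxtot, hytot] at hlt
    exact lt_irrefl _ hlt
  -- integrability
  have hmeasg : Measurable (fun n : ℕ => ((n : ℝ)) ^ 2) := measurable_from_top
  have hsum2x : Summable (fun n : ℕ => (n : ℝ) ^ 2 * x n) := by
    refine Summable.of_norm_bounded (((hs 2 θ hθ.le)).mul_left c) (fun n : ℕ => ?_)
    rw [Real.norm_eq_abs, abs_mul, abs_pow, Nat.abs_cast, abs_of_nonneg (hxnn n), hxa n]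
    calc (n : ℝ) ^ 2 * (c * (a n * θ ^ n)) ≤ (n : ℝ) ^ 2 * (c * (|a n| * θ ^ n)) := by
          have h1 : a n * θ ^ n ≤ |a n| * θ ^ n :=
            mul_le_mul_of_nonneg_right (le_abs_self _) (by positivity)
          have h2 : c * (a n * θ ^ n) ≤ c * (|a n| * θ ^ n) :=
            mul_le_mul_of_nonneg_left h1 hc0.le
          exact mul_le_mul_of_nonneg_left h2 (by positivity)
      _ = c * ((n : ℝ) ^ 2 * |a n| * θ ^ n) := by ring
  have hInt : Integrable (fun n : ℕ => ((n : ℝ)) ^ 2) (P.map X) := by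
    refine ⟨hmeasg.aestronglyMeasurable, ?_⟩
    rw [hasFiniteIntegral_def, lintegral_countable']
    have heq : ∀ n : ℕ, ‖((n : ℝ)) ^ 2‖ₑ * (P.map X) {n} =
        ENNReal.ofReal ((n : ℝ) ^ 2 * x n) := by
      intro n
      rw [hν n, Real.enorm_eq_ofReal (by positivity), ← ENNReal.ofReal_mul (by positivity)]
    rw [tsum_congr heq, ← ENNReal.ofReal_tsum_of_nonneg
      (fun n => mul_nonneg (by positivity) (hxnn n)) hsum2x]
    exact ENNReal.ofReal_lt_top
  -- compute the integral
  have hmap : ∫ ω, ((X ω : ℝ)) ^ 2 ∂P = ∫ n, ((n : ℝ)) ^ 2 ∂(P.map X) :=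
    (integral_map hXmeas.aemeasurable hmeasg.aestronglyMeasurable).symm
  rw [hmap, integral_countable' hInt]
  have hterm : ∀ n : ℕ, (P.map X).real {n} • ((n : ℝ)) ^ 2 = c * ((n : ℝ) ^ 2 * (a n * θ ^ n)) := by
    intro n
    rw [measureReal_def, hν n, ENNReal.toReal_ofReal (hxnn n), smul_eq_mul, hxa n]
    ring
  rw [tsum_congr hterm, tsum_mul_left, hSfull]
  -- final algebra with rpow identities
  have hln : l ≠ 0 := hl0.ne'
  simp only [hG, degExp]
  have e1 : (1 - l)/l = 1/l - 1 := by field_simp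
  have e2 : -l/l = (-1 : ℝ) := by rw [neg_div, div_self hln]
  have e3 : (1 + l * θ) ^ ((2*(1 - l))/l) = (1 + l * θ) ^ (1/l - 1) * (1 + l * θ) ^ (1/l - 1) := by
    rw [← Real.rpow_add hb]; congr 1; field_simp; ring
  have e4 : (1 + l * θ) ^ (-1 : ℝ) * (1 + l * θ) ^ (1/l - 1) = (1 + l * θ) ^ (1/l - 1 - 1) := by
    rw [← Real.rpow_add hb]; congr 1; ring
  rw [e1, e2, e3, ← e4]
  have h1l : (1/l - 1) * l = 1 - l := by field_simp
  linear_combination (θ * α * (1 + l * θ) ^ (1/l - 1)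
      + θ^2 * α * ((1/l - 1) * l) * ((1 + l * θ) ^ (-1 : ℝ) * (1 + l * θ) ^ (1/l - 1))
      + θ^2 * α^2 * ((1 + l * θ) ^ (1/l - 1) * (1 + l * θ) ^ (1/l - 1))) * hcF
    + (θ^2 * α * ((1 + l * θ) ^ (-1 : ℝ) * (1 + l * θ) ^ (1/l - 1))) * h1l
end
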